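/- arXiv:2010.01623 — 6 statements merged into one kernel-verified Lean document; each statement's English description precedes it below -/
import Mathlib

section
/- Let n and m be natural numbers. Consider the subposet T of the product poset (Fin (n+1) → Fin (m+1)) (pointwise order) consisting of those tuples x with x(i) ≤ x(n) for every i < n. Then the number of maximal chains of T equals the number of walks p : Fin ((n+1)·m + 1) → (Fin n → Fin (m+1)) such that p(0) is the zero tuple, p((n+1)·m) is the zero tuple, and for every step t, either (p(t+1))(i) = (p(t))(i) + 1 for all i ∈ Fin n (a diagonal (1,1,...,1) step), or there exists a single coordinate i₀ with (p(t+1))(i₀) + 1 = (p(t))(i₀) and (p(t+1))(i) = (p(t))(i) for all i ≠ i₀ (a step of −1 in one coordinate). -/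
abbrev TT (n m : ℕ) := {x : Fin (n + 1) → Fin (m + 1) //
    ∀ i : Fin (n + 1), (i : ℕ) < n → x i ≤ x ⟨n, Nat.lt_succ_self n⟩}

variable {n m : ℕ}

def rho (x : TT n m) : ℕ := ∑ i, (x.1 i : ℕ)

lemma rho_mono {x y : TT n m} (h : x < y) : rho x < rho y := by
  obtain ⟨hle, hne⟩ := lt_iff_le_and_ne.mp h
  have : ∃ i, (x.1 i : ℕ) < (y.1 i : ℕ) := by
    by_contra hc
    push_neg at hc
    apply hne; apply Subtype.ext; funext i
    exact le_antisymm (hle i) (hc i)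
  obtain ⟨i, hi⟩ := this
  exact Finset.sum_lt_sum (fun j _ => hle j) ⟨i, Finset.mem_univ i, hi⟩

lemma rho_le (x : TT n m) : rho x ≤ (n + 1) * m := by
  calc rho x ≤ ∑ _i : Fin (n+1), m := Finset.sum_le_sum (fun j _ => Fin.is_le _)
  _ = (n+1) * m := by simp [Finset.sum_const, mul_comm]

lemma eq_of_le_rho {x y : TT n m} (hle : x ≤ y) (h : rho y ≤ rho x) : x = y := by
  rcases eq_or_lt_of_le hle with h' | h'
  · exact h'
  · exact absurd (rho_mono h') (by omega)

def bo : TT n m := ⟨fun _ => 0, fun _ _ => le_refl _⟩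
def tp : TT n m := ⟨fun _ => ⟨m, Nat.lt_succ_self m⟩, fun _ _ => le_refl _⟩

lemma bo_le (x : TT n m) : bo ≤ x := fun i => Fin.zero_le _
lemma le_tp (x : TT n m) : x ≤ tp := fun i => Fin.le_last _

lemma rho_bo : rho (bo : TT n m) = 0 := by simp [rho, bo]
lemma rho_tp : rho (tp : TT n m) = (n + 1) * m := by
  simp [rho, tp, Finset.sum_const, mul_comm]

lemma eq_bo_of_rho {x : TT n m} (h : rho x = 0) : x = bo :=
  (eq_of_le_rho (bo_le x) (by rw [rho_bo]; omega)).symm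

lemma eq_tp_of_rho {x : TT n m} (h : rho x = (n + 1) * m) : x = tp :=
  eq_of_le_rho (le_tp x) (by rw [rho_tp]; omega)

lemma single_bump {x y : TT n m} (hle : x ≤ y) (h : rho y = rho x + 1) :
    ∃ i₀ : Fin (n+1), ((y.1 i₀ : ℕ) = (x.1 i₀ : ℕ) + 1) ∧
      ∀ j, j ≠ i₀ → (y.1 j : ℕ) = (x.1 j : ℕ) := by
  classical
  set d : Fin (n+1) → ℕ := fun j => (y.1 j : ℕ) - (x.1 j : ℕ) with hd
  have hsum : ∑ j, d j = 1 := by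
    have e1 : ∑ j, d j + ∑ j, (x.1 j : ℕ) = ∑ j, (y.1 j : ℕ) := by
      rw [← Finset.sum_add_distrib]
      apply Finset.sum_congr rfl
      intro j _
      have : (x.1 j : ℕ) ≤ (y.1 j : ℕ) := hle j
      simp only [hd]
      omega
    have h1 : rho y = ∑ j, (y.1 j : ℕ) := rfl
    have h2 : rho x = ∑ j, (x.1 j : ℕ) := rfl
    omega
  obtain ⟨i₀, _, hi₀⟩ : ∃ i₀ ∈ Finset.univ, d i₀ ≠ 0 := by
    by_contra hc
    push_neg at hc
    rw [Finset.sum_eq_zero (fun j hj => hc j hj)] at hsum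
    omega
  have hsplit : ∑ j ∈ Finset.univ.erase i₀, d j + d i₀ = 1 := by
    rw [Finset.sum_erase_add _ _ (Finset.mem_univ i₀)]; exact hsum
  have hz : ∀ j ∈ Finset.univ.erase i₀, d j = 0 := by
    rw [← Finset.sum_eq_zero_iff]
    omega
  refine ⟨i₀, ?_, ?_⟩
  · have h1 : (x.1 i₀ : ℕ) ≤ (y.1 i₀ : ℕ) := hle i₀
    have h2 : d i₀ = 1 := by omega
    simp only [hd] at h2
    omega
  · intro j hj
    have h1 : (x.1 j : ℕ) ≤ (y.1 j : ℕ) := hle j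
    have h2 := hz j (Finset.mem_erase.mpr ⟨hj, Finset.mem_univ j⟩)
    simp only [hd] at h2
    omega

lemma covby_of_rho {x y : TT n m} (hle : x ≤ y) (h : rho y = rho x + 1) : x ⋖ y := by
  constructor
  · rcases eq_or_lt_of_le hle with h' | h'
    · rw [h'] at h; omega
    · exact h'
  · intro z hz1 hz2
    have := rho_mono hz1
    have := rho_mono hz2
    omega

def nn : Fin (n+1) := ⟨n, Nat.lt_succ_self n⟩

lemma con_nat (x : TT n m) (i : Fin (n+1)) (hi : (i:ℕ) < n) :
    (x.1 i : ℕ) ≤ (x.1 (nn) : ℕ) := x.2 i hi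

def mk (f : Fin (n+1) → ℕ) (hf : ∀ i, f i ≤ m)
    (hc : ∀ i : Fin (n+1), (i:ℕ) < n → f i ≤ f nn) : TT n m :=
  ⟨fun i => ⟨f i, Nat.lt_succ_of_le (hf i)⟩, fun i hi => hc i hi⟩

lemma mk_val (f : Fin (n+1) → ℕ) (hf : ∀ i, f i ≤ m)
    (hc : ∀ i : Fin (n+1), (i:ℕ) < n → f i ≤ f nn) (i : Fin (n+1)) :
    ((mk f hf hc).1 i : ℕ) = f i := rfl

lemma extNat {x y : TT n m} (h : ∀ i, (x.1 i : ℕ) = (y.1 i : ℕ)) : x = y := by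
  apply Subtype.ext; funext i; exact Fin.ext (h i)

lemma lt_of_le_ne_nat {x y : TT n m} (hle : x ≤ y) (i : Fin (n+1))
    (h : (x.1 i : ℕ) ≠ (y.1 i : ℕ)) : x < y :=
  lt_iff_le_and_ne.mpr ⟨hle, fun hc => h (by rw [hc])⟩

lemma rho_add_one {x z : TT n m} (i₀ : Fin (n+1))
    (hz : ∀ j, (z.1 j : ℕ) = (x.1 j : ℕ) + if j = i₀ then 1 else 0) :
    rho z = rho x + 1 := by
  classical
  simp only [rho]
  rw [Finset.sum_congr rfl (fun j _ => hz j), Finset.sum_add_distrib,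
    Finset.sum_ite_eq' Finset.univ i₀ (fun _ => 1)]
  simp

lemma exists_lt_coord {x y : TT n m} (hle : x ≤ y) (hne : x ≠ y) :
    ∃ i, (x.1 i : ℕ) < (y.1 i : ℕ) := by
  by_contra hc
  push_neg at hc
  exact hne (extNat (fun i => le_antisymm (hle i) (hc i)))

lemma rho_covby {x y : TT n m} (h : x ⋖ y) : rho y = rho x + 1 := by
  classical
  have hlt := rho_mono h.1
  by_contra hne
  have hle : x ≤ y := h.1.le
  -- choose a bump coordinate
  obtain ⟨i₀, hi₀lt, hi₀con⟩ : ∃ i₀, (x.1 i₀ : ℕ) < (y.1 i₀ : ℕ) ∧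
      ((i₀:ℕ) < n → (x.1 i₀ : ℕ) < (x.1 nn : ℕ)) := by
    by_cases hn : (x.1 nn : ℕ) < (y.1 nn : ℕ)
    · exact ⟨nn, hn, fun hlt' => absurd hlt' (by simp [nn])⟩
    · obtain ⟨i₀, hi₀⟩ := exists_lt_coord hle h.1.ne
      have hnn : (x.1 nn : ℕ) = (y.1 nn : ℕ) := le_antisymm (hle nn) (le_of_not_gt hn)
      refine ⟨i₀, hi₀, fun hlt' => ?_⟩
      calc (x.1 i₀ : ℕ) < (y.1 i₀ : ℕ) := hi₀
        _ ≤ (y.1 nn : ℕ) := y.2 i₀ hlt'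
        _ = (x.1 nn : ℕ) := hnn.symm
  set f : Fin (n+1) → ℕ := fun j => (x.1 j : ℕ) + if j = i₀ then 1 else 0 with hf
  have hfb : ∀ i, f i ≤ m := by
    intro i
    simp only [hf]
    split
    · rename_i hii; subst hii
      have := Fin.is_le (y.1 i); omega
    · exact Fin.is_le _
  have hfc : ∀ i : Fin (n+1), (i:ℕ) < n → f i ≤ f nn := by
    intro i hi
    have hinn : i ≠ nn := by intro hc; rw [hc] at hi; simp [nn] at hi
    simp only [hf]
    by_cases hii : i = i₀
    · subst hii
      have h1 := hi₀con hi
      have : ¬ (nn : Fin (n+1)) = i := fun hc => hinn hc.symm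
      simp only [if_pos rfl]
      split
      · omega
      · omega
    · simp only [if_neg hii]
      have := con_nat x i hi
      split <;> omega
  set z : TT n m := mk f hfb hfc with hz
  have hzval : ∀ j, (z.1 j : ℕ) = (x.1 j : ℕ) + if j = i₀ then 1 else 0 := fun j => rfl
  have hxz : x < z := by
    refine lt_of_le_ne_nat (fun i => ?_) i₀ (by rw [hzval]; simp)
    rw [Fin.le_def, hzval]
    split <;> omega
  have hzy : z < y := by
    have hzyle : z ≤ y := by
      intro i
      rw [Fin.le_def, hzval]
      have := hle i
      rw [Fin.le_def] at this
      split
      · rename_i hii; subst hii; omega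
      · omega
    rcases eq_or_lt_of_le hzyle with h' | h'
    · exact absurd (h' ▸ rho_add_one i₀ hzval) hne
    · exact h'
  exact h.2 hxz hzy

section MaxChain

variable {C : Set (TT n m)} (hC : IsMaxChain (· ≤ ·) C)

include hC

lemma bo_mem : (bo : TT n m) ∈ C := by
  have hch : IsChain (· ≤ ·) (insert (bo : TT n m) C) :=
    hC.1.insert (fun y _ _ => Or.inl (bo_le y))
  have := hC.2 hch (Set.subset_insert _ _)
  rw [this]
  exact Set.mem_insert _ _

lemma tp_mem : (tp : TT n m) ∈ C := by
  have hch : IsChain (· ≤ ·) (insert (tp : TT n m) C) :=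
    hC.1.insert (fun y _ _ => Or.inr (le_tp y))
  have := hC.2 hch (Set.subset_insert _ _)
  rw [this]
  exact Set.mem_insert _ _

lemma rank_inj {x y : TT n m} (hx : x ∈ C) (hy : y ∈ C) (h : rho x = rho y) : x = y := by
  by_cases hxy : x = y
  · exact hxy
  · rcases hC.1 hx hy hxy with h' | h'
    · exact eq_of_le_rho h' (le_of_eq h.symm)
    · exact (eq_of_le_rho h' (le_of_eq h)).symm

lemma succ_exists {x : TT n m} (hx : x ∈ C) (hxt : x ≠ tp) :
    ∃ y ∈ C, x ⋖ y := by
  classical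
  set S : Set (TT n m) := {z ∈ C | x < z} with hS
  have hSfin : S.Finite := Set.toFinite S
  have hSne : S.Nonempty := ⟨tp, tp_mem hC, lt_of_le_of_ne (le_tp x) hxt⟩
  obtain ⟨y, hyS, hymin⟩ := Set.exists_min_image S rho hSfin hSne
  have hyle : ∀ z ∈ S, y ≤ z := by
    intro z hz
    by_cases hzy : z = y
    · exact le_of_eq hzy.symm
    · rcases hC.1 hz.1 hyS.1 hzy with h' | h'
      · have := rho_mono (lt_of_le_of_ne h' hzy)
        have := hymin z hz
        omega
      · exact h'
  refine ⟨y, hyS.1, hyS.2, fun z hxz hzy => ?_⟩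
  -- z strictly between x and y; show z ∈ C for contradiction
  have hzC : z ∈ C := by
    have hch : IsChain (· ≤ ·) (insert z C) := by
      apply hC.1.insert
      intro b hb hzb
      by_cases hbx : b = x
      · subst hbx; exact Or.inr hxz.le
      · rcases hC.1 hb hx hbx with h' | h'
        · exact Or.inr (h'.trans hxz.le)
        · have hbS : b ∈ S := ⟨hb, lt_of_le_of_ne h' (fun hc => hbx hc.symm)⟩
          exact Or.inl (hzy.le.trans (hyle b hbS))
    have := hC.2 hch (Set.subset_insert _ _)
    rw [this]; exact Set.mem_insert _ _
  have : y ≤ z := hyle z ⟨hzC, hxz⟩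
  exact absurd (lt_of_lt_of_le hzy this) (lt_irrefl _)

lemma rank_exists : ∀ t, t ≤ (n+1)*m → ∃ x ∈ C, rho x = t := by
  intro t
  induction t with
  | zero => intro _; exact ⟨bo, bo_mem hC, rho_bo⟩
  | succ t ih =>
    intro ht
    obtain ⟨x, hxC, hxr⟩ := ih (by omega)
    have hxt : x ≠ tp := by
      intro hc; rw [hc, rho_tp] at hxr; omega
    obtain ⟨y, hyC, hcov⟩ := succ_exists hC hxC hxt
    exact ⟨y, hyC, by rw [rho_covby hcov, hxr]⟩

end MaxChain

section ChainElem

variable {C : Set (TT n m)} (hC : IsMaxChain (· ≤ ·) C)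

noncomputable def chainElem (t : Fin ((n+1)*m + 1)) : TT n m :=
  (rank_exists hC (t : ℕ) (by omega)).choose

lemma chainElem_mem (t : Fin ((n+1)*m + 1)) : chainElem hC t ∈ C :=
  (rank_exists hC (t : ℕ) (by omega)).choose_spec.1

lemma chainElem_rho (t : Fin ((n+1)*m + 1)) : rho (chainElem hC t) = (t : ℕ) :=
  (rank_exists hC (t : ℕ) (by omega)).choose_spec.2

lemma chainElem_covby (t : ℕ) (h : t < (n+1)*m) :
    chainElem hC ⟨t, Nat.lt_succ_of_lt h⟩ ⋖ chainElem hC ⟨t+1, Nat.succ_lt_succ h⟩ := by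
  have hrx : rho (chainElem hC ⟨t, Nat.lt_succ_of_lt h⟩) = t := chainElem_rho hC _
  have hry : rho (chainElem hC ⟨t+1, Nat.succ_lt_succ h⟩) = t + 1 := chainElem_rho hC _
  have hne : chainElem hC ⟨t, Nat.lt_succ_of_lt h⟩ ≠ chainElem hC ⟨t+1, Nat.succ_lt_succ h⟩ := by
    intro hc; rw [hc, hry] at hrx; omega
  have hle : chainElem hC ⟨t, Nat.lt_succ_of_lt h⟩ ≤ chainElem hC ⟨t+1, Nat.succ_lt_succ h⟩ := by
    rcases hC.1 (chainElem_mem hC _) (chainElem_mem hC _) hne with h' | h'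
    · exact h'
    · have := rho_mono (lt_of_le_of_ne h' hne.symm)
      omega
  exact covby_of_rho hle (by omega)

lemma chain_eq_range : C = Set.range (chainElem hC) := by
  apply Set.eq_of_subset_of_subset
  · intro c hc
    have hle := rho_le c
    refine ⟨⟨rho c, by omega⟩, ?_⟩
    exact rank_inj hC (chainElem_mem hC _) hc (chainElem_rho hC _)
  · rintro c ⟨t, rfl⟩
    exact chainElem_mem hC t

end ChainElem

def IsWalk (p : Fin ((n + 1) * m + 1) → (Fin n → Fin (m + 1))) : Prop :=
  (∀ i, p ⟨0, Nat.succ_pos _⟩ i = 0) ∧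
  (∀ i, p ⟨(n + 1) * m, Nat.lt_succ_self _⟩ i = 0) ∧
  (∀ (t : ℕ) (h : t < (n + 1) * m),
    (∀ i, ((p ⟨t + 1, Nat.succ_lt_succ h⟩ i : ℕ)
        = (p ⟨t, Nat.lt_succ_of_lt h⟩ i : ℕ) + 1)) ∨
    (∃ i₀, ((p ⟨t + 1, Nat.succ_lt_succ h⟩ i₀ : ℕ) + 1
        = (p ⟨t, Nat.lt_succ_of_lt h⟩ i₀ : ℕ)) ∧
      ∀ i, i ≠ i₀ →
        p ⟨t + 1, Nat.succ_lt_succ h⟩ i = p ⟨t, Nat.lt_succ_of_lt h⟩ i))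

section ToWalk

variable {C : Set (TT n m)} (hC : IsMaxChain (· ≤ ·) C)

noncomputable def toWalk : Fin ((n + 1) * m + 1) → (Fin n → Fin (m + 1)) :=
  fun t i => ⟨((chainElem hC t).1 nn : ℕ) - ((chainElem hC t).1 i.castSucc : ℕ), by
    have h2 := Fin.is_le ((chainElem hC t).1 nn)
    omega⟩

lemma toWalk_val (t : Fin ((n + 1) * m + 1)) (i : Fin n) :
    (toWalk hC t i : ℕ)
      = ((chainElem hC t).1 nn : ℕ) - ((chainElem hC t).1 i.castSucc : ℕ) := rfl

lemma castSucc_ne_nn (i : Fin n) : (i.castSucc : Fin (n+1)) ≠ nn := by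
  intro hc
  have : (i.castSucc : ℕ) = n := by rw [hc]; rfl
  rw [Fin.coe_castSucc] at this
  omega

lemma castSucc_lt (i : Fin n) : ((i.castSucc : Fin (n+1)) : ℕ) < n := by
  rw [Fin.coe_castSucc]; exact i.isLt

lemma toWalk_isWalk : IsWalk (toWalk hC) := by
  refine ⟨?_, ?_, ?_⟩
  · intro i
    have h0 : chainElem hC ⟨0, Nat.succ_pos _⟩ = bo :=
      eq_bo_of_rho (chainElem_rho hC _)
    apply Fin.ext
    rw [toWalk_val, h0]
    simp [bo]
  · intro i
    have h0 : chainElem hC ⟨(n+1)*m, Nat.lt_succ_self _⟩ = tp :=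
      eq_tp_of_rho (chainElem_rho hC _)
    apply Fin.ext
    rw [toWalk_val, h0]
    simp [tp]
  · intro t h
    have hcov := chainElem_covby hC t h
    obtain ⟨i₀, hbump, hrest⟩ := single_bump hcov.1.le (rho_covby hcov)
    by_cases hi₀ : i₀ = nn
    · subst hi₀
      left
      intro i
      rw [toWalk_val, toWalk_val]
      have h1 := hrest i.castSucc (castSucc_ne_nn i)
      have h2 := con_nat (chainElem hC ⟨t, Nat.lt_succ_of_lt h⟩) i.castSucc (castSucc_lt i)
      omega
    · right
      have hi₀n : (i₀ : ℕ) < n := by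
        have h1 : (i₀ : ℕ) ≤ n := by omega
        have h2 : (i₀ : ℕ) ≠ n := by
          intro hc; exact hi₀ (Fin.ext hc)
        omega
      refine ⟨⟨(i₀ : ℕ), hi₀n⟩, ?_, ?_⟩
      · rw [toWalk_val, toWalk_val]
        have hcs : (⟨(i₀ : ℕ), hi₀n⟩ : Fin n).castSucc = i₀ := Fin.ext rfl
        rw [hcs]
        have h1 := hrest nn (Ne.symm hi₀)
        have h2 := con_nat (chainElem hC ⟨t+1, Nat.succ_lt_succ h⟩) i₀ hi₀n
        have h3 := con_nat (chainElem hC ⟨t, Nat.lt_succ_of_lt h⟩) i₀ hi₀n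
        omega
      · intro i hi
        apply Fin.ext
        rw [toWalk_val, toWalk_val]
        have hics : i.castSucc ≠ i₀ := by
          intro hc
          apply hi
          apply Fin.ext
          have : (i.castSucc : ℕ) = (i₀ : ℕ) := by rw [hc]
          rw [Fin.coe_castSucc] at this
          exact this
        have h1 := hrest nn (Ne.symm hi₀)
        have h2 := hrest i.castSucc hics
        omega

end ToWalk

section FromWalk

variable (p : Fin ((n + 1) * m + 1) → (Fin n → Fin (m + 1)))

def IsDiag (t : ℕ) (h : t < (n+1)*m) : Prop :=
  ∀ i, ((p ⟨t + 1, Nat.succ_lt_succ h⟩ i : ℕ) = (p ⟨t, Nat.lt_succ_of_lt h⟩ i : ℕ) + 1)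

instance (t : ℕ) (h : t < (n+1)*m) : Decidable (IsDiag p t h) := by
  unfold IsDiag; infer_instance

def sfun : ℕ → ℕ
  | 0 => 0
  | t + 1 => if h : t < (n+1)*m then
      (if IsDiag p t h then sfun t + 1 else sfun t) else sfun t

lemma sfun_succ (t : ℕ) (h : t < (n+1)*m) :
    sfun p (t+1) = if IsDiag p t h then sfun p t + 1 else sfun p t := by
  rw [sfun, dif_pos h]

lemma sfun_mono : Monotone (sfun p) := by
  apply monotone_nat_of_le_succ
  intro t
  rw [sfun]
  split
  · split <;> omega
  · omega

variable {p}

lemma not_diag_step (hp : IsWalk p) (t : ℕ) (h : t < (n+1)*m) (hnd : ¬ IsDiag p t h) :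
    ∃ i₀, ((p ⟨t + 1, Nat.succ_lt_succ h⟩ i₀ : ℕ) + 1
        = (p ⟨t, Nat.lt_succ_of_lt h⟩ i₀ : ℕ)) ∧
      ∀ i, i ≠ i₀ →
        p ⟨t + 1, Nat.succ_lt_succ h⟩ i = p ⟨t, Nat.lt_succ_of_lt h⟩ i := by
  rcases hp.2.2 t h with h' | h'
  · exact absurd h' hnd
  · exact h'

lemma sfun_spec (hp : IsWalk p) :
    ∀ (t : ℕ) (ht : t < (n+1)*m + 1),
      (n+1) * sfun p t = t + ∑ i, (p ⟨t, ht⟩ i : ℕ) ∧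
      ∀ i, (p ⟨t, ht⟩ i : ℕ) ≤ sfun p t := by
  intro t
  induction t with
  | zero =>
    intro ht
    have hz : ∀ i, (p ⟨0, ht⟩ i : ℕ) = 0 := fun i => congrArg Fin.val (hp.1 i)
    constructor
    · rw [Finset.sum_eq_zero (fun i _ => hz i), sfun]; omega
    · intro i; rw [hz i, sfun]
  | succ t ih =>
    intro ht
    have h : t < (n+1)*m := by omega
    have e1 : (⟨t+1, ht⟩ : Fin ((n+1)*m+1)) = ⟨t+1, Nat.succ_lt_succ h⟩ := rfl
    rw [e1]
    obtain ⟨ihs, ihb⟩ := ih (Nat.lt_succ_of_lt h)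
    by_cases hd : IsDiag p t h
    · have hs : sfun p (t+1) = sfun p t + 1 := by rw [sfun_succ p t h, if_pos hd]
      have hsum : ∑ i, (p ⟨t+1, Nat.succ_lt_succ h⟩ i : ℕ)
          = ∑ i, (p ⟨t, Nat.lt_succ_of_lt h⟩ i : ℕ) + n := by
        have e : ∀ i ∈ Finset.univ, (p ⟨t+1, Nat.succ_lt_succ h⟩ i : ℕ)
            = (p ⟨t, Nat.lt_succ_of_lt h⟩ i : ℕ) + 1 := fun i _ => hd i
        rw [Finset.sum_congr rfl e, Finset.sum_add_distrib]
        simp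
      have hring : (n+1) * (sfun p t + 1) = (n+1) * sfun p t + (n+1) := by ring
      constructor
      · rw [hs, hsum]
        omega
      · intro i
        have h1 := ihb i
        have h2 := hd i
        omega
    · have hs : sfun p (t+1) = sfun p t := by rw [sfun_succ p t h, if_neg hd]
      obtain ⟨i₀, hd1, hd2⟩ := not_diag_step hp t h hd
      have hsum : ∑ i, (p ⟨t+1, Nat.succ_lt_succ h⟩ i : ℕ) + 1
          = ∑ i, (p ⟨t, Nat.lt_succ_of_lt h⟩ i : ℕ) := by
        classical
        have e2 := Finset.sum_erase_add Finset.univ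
          (fun i => (p ⟨t+1, Nat.succ_lt_succ h⟩ i : ℕ)) (Finset.mem_univ i₀)
        have e3 := Finset.sum_erase_add Finset.univ
          (fun i => (p ⟨t, Nat.lt_succ_of_lt h⟩ i : ℕ)) (Finset.mem_univ i₀)
        have e : ∑ j ∈ Finset.univ.erase i₀, (p ⟨t+1, Nat.succ_lt_succ h⟩ j : ℕ)
            = ∑ j ∈ Finset.univ.erase i₀, (p ⟨t, Nat.lt_succ_of_lt h⟩ j : ℕ) := by
          apply Finset.sum_congr rfl
          intro j hj
          exact congrArg Fin.val (hd2 j (Finset.mem_erase.mp hj).1)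
        omega
      constructor
      · rw [hs]; omega
      · intro i
        by_cases hii : i = i₀
        · subst hii; have := ihb i; omega
        · have := congrArg Fin.val (hd2 i hii)
          have := ihb i
          omega

lemma sfun_last (hp : IsWalk p) : sfun p ((n+1)*m) = m := by
  obtain ⟨hs, _⟩ := sfun_spec hp ((n+1)*m) (Nat.lt_succ_self _)
  have hz : ∀ i, (p ⟨(n+1)*m, Nat.lt_succ_self _⟩ i : ℕ) = 0 :=
    fun i => congrArg Fin.val (hp.2.1 i)
  rw [Finset.sum_eq_zero (fun i _ => hz i)] at hs
  exact Nat.eq_of_mul_eq_mul_left (by omega) (by omega : (n+1) * sfun p ((n+1)*m) = (n+1) * m)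

lemma sfun_le (hp : IsWalk p) (t : ℕ) (ht : t ≤ (n+1)*m) : sfun p t ≤ m := by
  have := sfun_mono p ht
  rw [sfun_last hp] at this
  exact this

noncomputable def fromWalkEl (hp : IsWalk p) (t : Fin ((n+1)*m + 1)) : TT n m :=
  mk (fun j => if hj : (j : ℕ) < n then sfun p t - (p t ⟨(j : ℕ), hj⟩ : ℕ) else sfun p t)
    (fun i => by
      have := sfun_le hp t (by omega)
      split <;> omega)
    (fun i hi => by
      have hnn : ¬ ((nn : Fin (n+1)) : ℕ) < n := by simp [nn]
      rw [dif_pos hi, dif_neg hnn]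
      omega)

lemma fromWalkEl_val_nn (hp : IsWalk p) (t : Fin ((n+1)*m + 1)) :
    ((fromWalkEl hp t).1 nn : ℕ) = sfun p t := by
  rw [fromWalkEl, mk_val]
  have hnn : ¬ ((nn : Fin (n+1)) : ℕ) < n := by simp [nn]
  rw [dif_neg hnn]

lemma fromWalkEl_val_cs (hp : IsWalk p) (t : Fin ((n+1)*m + 1)) (i : Fin n) :
    ((fromWalkEl hp t).1 i.castSucc : ℕ) = sfun p t - (p t i : ℕ) := by
  rw [fromWalkEl, mk_val]
  rw [dif_pos (castSucc_lt i)]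
  rfl

lemma fromWalkEl_val (hp : IsWalk p) (t : Fin ((n+1)*m + 1)) (j : Fin (n+1))
    (hj : (j : ℕ) < n) :
    ((fromWalkEl hp t).1 j : ℕ) = sfun p t - (p t ⟨(j : ℕ), hj⟩ : ℕ) := by
  rw [fromWalkEl, mk_val, dif_pos hj]

lemma p_eta (t : Fin ((n+1)*m+1)) (h : (t : ℕ) < (n+1)*m + 1) :
    p ⟨(t : ℕ), h⟩ = p t := rfl

lemma rho_fromWalkEl (hp : IsWalk p) (t : Fin ((n+1)*m + 1)) :
    rho (fromWalkEl hp t) = (t : ℕ) := by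
  have hb : ∀ i, (p t i : ℕ) ≤ sfun p (t : ℕ) := by
    intro i
    exact (sfun_spec hp (t : ℕ) t.isLt).2 i
  have hsum : (n+1) * sfun p (t : ℕ) = (t : ℕ) + ∑ i, (p t i : ℕ) := by
    exact (sfun_spec hp (t : ℕ) t.isLt).1
  simp only [rho]
  rw [Fin.sum_univ_castSucc]
  have hlast : ((fromWalkEl hp t).1 (Fin.last n) : ℕ) = sfun p (t : ℕ) :=
    fromWalkEl_val_nn hp t
  have hcs : ∀ i : Fin n, ((fromWalkEl hp t).1 i.castSucc : ℕ) = sfun p (t : ℕ) - (p t i : ℕ) :=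
    fromWalkEl_val_cs hp t
  rw [hlast, Finset.sum_congr rfl (fun i _ => hcs i)]
  have e1 : ∑ i : Fin n, (sfun p (t : ℕ) - (p t i : ℕ)) + ∑ i, (p t i : ℕ)
      = n * sfun p (t : ℕ) := by
    rw [← Finset.sum_add_distrib]
    rw [Finset.sum_congr rfl (fun i (_ : i ∈ Finset.univ) => by
      have := hb i; omega : ∀ i ∈ Finset.univ, sfun p (t:ℕ) - (p t i : ℕ) + (p t i : ℕ) = sfun p (t:ℕ))]
    simp [mul_comm]
  have e2 : (n+1) * sfun p (t : ℕ) = n * sfun p (t : ℕ) + sfun p (t : ℕ) := by ring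
  omega

lemma fromWalkEl_le_succ (hp : IsWalk p) (t : ℕ) (h : t < (n+1)*m) :
    fromWalkEl hp ⟨t, Nat.lt_succ_of_lt h⟩ ≤ fromWalkEl hp ⟨t+1, Nat.succ_lt_succ h⟩ := by
  intro j
  rw [Fin.le_def]
  have ev1 : ((⟨t, Nat.lt_succ_of_lt h⟩ : Fin ((n+1)*m+1)) : ℕ) = t := rfl
  have ev2 : ((⟨t+1, Nat.succ_lt_succ h⟩ : Fin ((n+1)*m+1)) : ℕ) = t + 1 := rfl
  have hb : ∀ i, (p ⟨t, Nat.lt_succ_of_lt h⟩ i : ℕ) ≤ sfun p t :=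
    (sfun_spec hp t (Nat.lt_succ_of_lt h)).2
  by_cases hj : (j : ℕ) < n
  · rw [fromWalkEl_val hp _ j hj, fromWalkEl_val hp _ j hj, ev1, ev2]
    by_cases hd : IsDiag p t h
    · have hs : sfun p (t+1) = sfun p t + 1 := by rw [sfun_succ p t h, if_pos hd]
      have := hd ⟨(j : ℕ), hj⟩
      have := hb ⟨(j : ℕ), hj⟩
      omega
    · have hs : sfun p (t+1) = sfun p t := by rw [sfun_succ p t h, if_neg hd]
      obtain ⟨i₀, hd1, hd2⟩ := not_diag_step hp t h hd
      by_cases hji : (⟨(j : ℕ), hj⟩ : Fin n) = i₀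
      · rw [← hji] at hd1
        have := hb ⟨(j : ℕ), hj⟩
        omega
      · have := congrArg Fin.val (hd2 _ hji)
        have := hb ⟨(j : ℕ), hj⟩
        omega
  · have hjn : j = nn := by
      apply Fin.ext
      have := j.isLt
      simp only [nn]
      omega
    subst hjn
    rw [fromWalkEl_val_nn, fromWalkEl_val_nn, ev1, ev2]
    exact sfun_mono p (by omega)

lemma fromWalkEl_mono (hp : IsWalk p) (a b : ℕ) (ha : a < (n+1)*m + 1)
    (hb : b < (n+1)*m + 1) (hab : a ≤ b) :
    fromWalkEl hp ⟨a, ha⟩ ≤ fromWalkEl hp ⟨b, hb⟩ := by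
  induction b with
  | zero =>
    have : a = 0 := by omega
    subst this
    exact le_refl _
  | succ b ih =>
    rcases Nat.lt_or_ge a (b+1) with h' | h'
    · have hab' : a ≤ b := by omega
      have hbN : b < (n+1)*m := by omega
      exact (ih (by omega) hab').trans (fromWalkEl_le_succ hp b hbN)
    · have : a = b + 1 := by omega
      subst this
      exact le_refl _

noncomputable def fromWalk (hp : IsWalk p) : Set (TT n m) :=
  Set.range (fromWalkEl hp)

lemma fromWalk_isMaxChain (hp : IsWalk p) : IsMaxChain (· ≤ ·) (fromWalk hp) := by
  constructor
  · rintro _ ⟨t, rfl⟩ _ ⟨t', rfl⟩ _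
    rcases Nat.le_total (t : ℕ) (t' : ℕ) with h' | h'
    · exact Or.inl (fromWalkEl_mono hp t t' t.isLt t'.isLt h')
    · exact Or.inr (fromWalkEl_mono hp t' t t'.isLt t.isLt h')
  · intro D hD hsub
    apply Set.eq_of_subset_of_subset hsub
    intro w hw
    have hwr := rho_le w
    set t : Fin ((n+1)*m + 1) := ⟨rho w, by omega⟩ with htdef
    have hel : fromWalkEl hp t ∈ D := hsub ⟨t, rfl⟩
    have hrt : rho (fromWalkEl hp t) = rho w := rho_fromWalkEl hp t
    have : w = fromWalkEl hp t := by
      by_cases hne : w = fromWalkEl hp t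
      · exact hne
      · rcases hD hw hel hne with h' | h'
        · exact eq_of_le_rho h' (le_of_eq hrt)
        · exact (eq_of_le_rho h' (le_of_eq hrt.symm)).symm
    rw [this]
    exact ⟨t, rfl⟩

end FromWalk

section Inverses

variable {p : Fin ((n + 1) * m + 1) → (Fin n → Fin (m + 1))}

lemma chainElem_fromWalk (hp : IsWalk p) (hC' : IsMaxChain (· ≤ ·) (fromWalk hp))
    (t : Fin ((n+1)*m + 1)) : chainElem hC' t = fromWalkEl hp t :=
  rank_inj hC' (chainElem_mem hC' t) ⟨t, rfl⟩
    (by rw [chainElem_rho, rho_fromWalkEl])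

lemma toWalk_fromWalk (hp : IsWalk p) (hC' : IsMaxChain (· ≤ ·) (fromWalk hp)) :
    toWalk hC' = p := by
  funext t i
  apply Fin.ext
  rw [toWalk_val, chainElem_fromWalk hp hC' t, fromWalkEl_val_nn, fromWalkEl_val_cs]
  have hb : (p t i : ℕ) ≤ sfun p (t : ℕ) := (sfun_spec hp (t : ℕ) t.isLt).2 i
  omega

variable {C : Set (TT n m)}

lemma sfun_toWalk (hC : IsMaxChain (· ≤ ·) C) :
    ∀ (t : ℕ) (ht : t < (n+1)*m + 1),
      sfun (toWalk hC) t = ((chainElem hC ⟨t, ht⟩).1 nn : ℕ) := by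
  intro t
  induction t with
  | zero =>
    intro ht
    have h0 : chainElem hC ⟨0, ht⟩ = bo := eq_bo_of_rho (chainElem_rho hC _)
    rw [h0, sfun]
    rfl
  | succ t ih =>
    intro ht
    have h : t < (n+1)*m := by omega
    have e1 : (⟨t+1, ht⟩ : Fin ((n+1)*m+1)) = ⟨t+1, Nat.succ_lt_succ h⟩ := rfl
    rw [e1]
    have ihh := ih (Nat.lt_succ_of_lt h)
    have hcov := chainElem_covby hC t h
    obtain ⟨i₀, hbump, hrest⟩ := single_bump hcov.1.le (rho_covby hcov)
    by_cases hi₀ : i₀ = nn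
    · subst hi₀
      have hd : IsDiag (toWalk hC) t h := by
        intro i
        rw [toWalk_val, toWalk_val]
        have h1 := hrest i.castSucc (castSucc_ne_nn i)
        have h2 := con_nat (chainElem hC ⟨t, Nat.lt_succ_of_lt h⟩) i.castSucc (castSucc_lt i)
        omega
      rw [sfun_succ _ t h, if_pos hd, ihh]
      omega
    · have hi₀n : (i₀ : ℕ) < n := by
        have h1 : (i₀ : ℕ) ≤ n := by omega
        have h2 : (i₀ : ℕ) ≠ n := fun hc => hi₀ (Fin.ext hc)
        omega
      have hd : ¬ IsDiag (toWalk hC) t h := by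
        intro hd
        have := hd ⟨(i₀ : ℕ), hi₀n⟩
        rw [toWalk_val, toWalk_val] at this
        have hcs : (⟨(i₀ : ℕ), hi₀n⟩ : Fin n).castSucc = i₀ := Fin.ext rfl
        rw [hcs] at this
        have h1 := hrest nn (Ne.symm hi₀)
        have h2 := con_nat (chainElem hC ⟨t+1, Nat.succ_lt_succ h⟩) i₀ hi₀n
        have h3 := con_nat (chainElem hC ⟨t, Nat.lt_succ_of_lt h⟩) i₀ hi₀n
        omega
      rw [sfun_succ _ t h, if_neg hd, ihh]
      have h1 := hrest nn (Ne.symm hi₀)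
      omega

lemma fromWalk_toWalk (hC : IsMaxChain (· ≤ ·) C) (hp : IsWalk (toWalk hC)) :
    fromWalk hp = C := by
  have hel : ∀ t, fromWalkEl hp t = chainElem hC t := by
    intro t
    apply extNat
    intro j
    have hs : sfun (toWalk hC) (t : ℕ) = ((chainElem hC t).1 nn : ℕ) := by
      have := sfun_toWalk hC (t : ℕ) t.isLt
      rwa [show (⟨(t : ℕ), t.isLt⟩ : Fin ((n+1)*m+1)) = t from Fin.ext rfl] at this
    by_cases hj : (j : ℕ) < n
    · rw [fromWalkEl_val hp t j hj, hs]
      have hcs : (⟨(j : ℕ), hj⟩ : Fin n).castSucc = j := Fin.ext rfl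
      have htw : (toWalk hC t ⟨(j : ℕ), hj⟩ : ℕ)
          = ((chainElem hC t).1 nn : ℕ) - ((chainElem hC t).1 j : ℕ) := by
        rw [toWalk_val, hcs]
      rw [htw]
      have := con_nat (chainElem hC t) j hj
      omega
    · have hjn : j = nn := by
        apply Fin.ext
        have := j.isLt
        simp only [nn]
        omega
      subst hjn
      rw [fromWalkEl_val_nn, hs]
  have : fromWalkEl hp = chainElem hC := funext hel
  rw [fromWalk, this, ← chain_eq_range]

end Inverses

noncomputable def equivMaxChainWalk :
    {C : Set (TT n m) // IsMaxChain (· ≤ ·) C} ≃ {p // IsWalk (n := n) (m := m) p} where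
  toFun c := ⟨toWalk c.2, toWalk_isWalk c.2⟩
  invFun w := ⟨fromWalk w.2, fromWalk_isMaxChain w.2⟩
  left_inv c := Subtype.ext (fromWalk_toWalk c.2 _)
  right_inv w := Subtype.ext (toWalk_fromWalk w.2 _)

/-- The number of maximal chains of the subposet of `Fin (n+1) → Fin (m+1)` of tuples
with `x i ≤ x n` for all `i < n` (the representation of `Σ_m C_m^n`) equals the number
of lattice walks of length `(n+1)·m` in `{0,…,m}^n` starting and ending at the origin
and using only the steps `(1,1,…,1)`, `(−1,0,…,0)`, …, `(0,…,0,−1)`. -/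
theorem stmt_6 (n m : ℕ) :
    Nat.card {C : Set {x : Fin (n + 1) → Fin (m + 1) //
        ∀ i : Fin (n + 1), (i : ℕ) < n → x i ≤ x ⟨n, Nat.lt_succ_self n⟩} //
      IsMaxChain (· ≤ ·) C}
    = Nat.card {p : Fin ((n + 1) * m + 1) → (Fin n → Fin (m + 1)) //
        (∀ i, p ⟨0, Nat.succ_pos _⟩ i = 0) ∧
        (∀ i, p ⟨(n + 1) * m, Nat.lt_succ_self _⟩ i = 0) ∧
        (∀ (t : ℕ) (h : t < (n + 1) * m),
          (∀ i, ((p ⟨t + 1, Nat.succ_lt_succ h⟩ i : ℕ)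
              = (p ⟨t, Nat.lt_succ_of_lt h⟩ i : ℕ) + 1)) ∨
          (∃ i₀, ((p ⟨t + 1, Nat.succ_lt_succ h⟩ i₀ : ℕ) + 1
              = (p ⟨t, Nat.lt_succ_of_lt h⟩ i₀ : ℕ)) ∧
            ∀ i, i ≠ i₀ →
              p ⟨t + 1, Nat.succ_lt_succ h⟩ i = p ⟨t, Nat.lt_succ_of_lt h⟩ i))} := by
  exact Nat.card_congr equivMaxChainWalk
end

section
/- Let n and m be natural numbers. The number of maximal chains of the product poset (Fin n → Fin (m+1)) with the pointwise order, multiplied by (m!)^n, equals (m·n)!. That is, the number of maximal chains of the n-fold power of the (m+1)-element chain is (mn)!/(m!)^n. -/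
open Finset

namespace Stmt7

variable {n m : ℕ}

def rk (f : Fin n → Fin (m+1)) : ℕ := ∑ i, (f i : ℕ)

lemma rk_lt_rk {f g : Fin n → Fin (m+1)} (h : f < g) : rk f < rk g := by
  obtain ⟨hle, i, hi⟩ := Pi.lt_def.1 h
  exact Finset.sum_lt_sum (fun j _ => by exact_mod_cast hle j)
    ⟨i, Finset.mem_univ i, by exact_mod_cast hi⟩

lemma rk_bot : rk (⊥ : Fin n → Fin (m+1)) = 0 := by
  simp [rk, Fin.bot_eq_zero]

lemma rk_top : rk (⊤ : Fin n → Fin (m+1)) = m * n := by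
  simp [rk, Fin.top_eq_last, Fin.val_last, mul_comm]

lemma eq_top_of_rk {f : Fin n → Fin (m+1)} (h : rk f = m * n) : f = ⊤ := by
  by_contra hf
  have h2 := rk_lt_rk (lt_top_iff_ne_top.2 hf)
  rw [rk_top, h] at h2
  omega

lemma covby_iff {f g : Fin n → Fin (m+1)} :
    f ⋖ g ↔ ∃ i, ((g i : ℕ) = (f i : ℕ) + 1 ∧ ∀ j, j ≠ i → f j = g j) := by
  constructor
  · intro h
    obtain ⟨hle, i, hi⟩ := Pi.lt_def.1 h.lt
    have hgm : (g i : ℕ) ≤ m := Nat.lt_succ_iff.1 (g i).isLt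
    have hfi : (f i : ℕ) + 1 ≤ m := le_trans (by exact_mod_cast hi) hgm
    set c : Fin n → Fin (m+1) := Function.update f i ⟨(f i : ℕ) + 1, by omega⟩ with hc
    have hfc : f < c := by
      rw [Pi.lt_def]
      constructor
      · intro j
        rcases eq_or_ne j i with rfl | hj
        · simp [hc, Fin.le_def]
        · simp [hc, Function.update_of_ne hj]
      · exact ⟨i, by simp [hc, Fin.lt_def]⟩
    have hcg : c ≤ g := by
      intro j
      rcases eq_or_ne j i with rfl | hj
      · simp [hc, Fin.le_def]
        exact_mod_cast hi
      · simpa [hc, Function.update_of_ne hj] using hle j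
    have hceq : c = g := by
      by_contra hne
      exact h.2 hfc (lt_of_le_of_ne hcg hne)
    refine ⟨i, ?_, ?_⟩
    · rw [← hceq]; simp [hc]
    · intro j hj; rw [← hceq]; simp [hc, Function.update_of_ne hj]
  · rintro ⟨i, hi, hj⟩
    have hfg : f < g := by
      rw [Pi.lt_def]
      refine ⟨fun j => ?_, i, by rw [Fin.lt_def]; omega⟩
      rcases eq_or_ne j i with rfl | h'
      · rw [Fin.le_def]; omega
      · exact (hj j h').le
    refine ⟨hfg, fun c hfc hcg => ?_⟩
    obtain ⟨hle, k, hk⟩ := Pi.lt_def.1 hfc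
    have hki : k = i := by
      by_contra h'
      have h1 : c k ≤ g k := hcg.le k
      rw [← hj k h'] at h1
      exact absurd (le_antisymm h1 (hle k)) hk.ne'
    subst hki
    have : c = g := by
      funext j
      rcases eq_or_ne j k with rfl | h'
      · have h1 : (c j : ℕ) ≤ (g j : ℕ) := hcg.le j
        have h2 : (f j : ℕ) < (c j : ℕ) := hk
        exact Fin.ext (by omega)
      · exact le_antisymm (hcg.le j) (hj j h' ▸ hle j)
    exact absurd this hcg.ne
  
lemma rk_covby {f g : Fin n → Fin (m+1)} (h : f ⋖ g) : rk g = rk f + 1 := by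
  obtain ⟨i, hi, hj⟩ := covby_iff.1 h
  unfold rk
  rw [← Finset.sum_erase_add _ _ (mem_univ i), ← Finset.sum_erase_add _ _ (mem_univ i)]
  have he : ∑ j ∈ univ.erase i, (g j : ℕ) = ∑ j ∈ univ.erase i, (f j : ℕ) :=
    Finset.sum_congr rfl fun j hj' => by rw [hj j (Finset.mem_erase.1 hj').1]
  omega


def IsPath (c : Fin (m*n+1) → (Fin n → Fin (m+1))) : Prop :=
  c 0 = ⊥ ∧ ∀ k : Fin (m*n), c k.castSucc ⋖ c k.succ

lemma IsPath.rk_apply {c} (hc : IsPath (n := n) (m := m) c) (k : Fin (m*n+1)) :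
    rk (c k) = k.val := by
  induction k using Fin.induction with
  | zero => rw [hc.1, rk_bot]; rfl
  | succ k ih =>
    rw [rk_covby (hc.2 k)]
    simp only [Fin.coe_castSucc] at ih
    simp [ih, Fin.val_succ]

lemma IsPath.last_eq_top {c} (hc : IsPath (n := n) (m := m) c) : c (Fin.last _) = ⊤ :=
  eq_top_of_rk (by rw [hc.rk_apply]; simp)

lemma IsPath.maxChain {c} (hc : IsPath (n := n) (m := m) c) :
    IsMaxChain (· ≤ ·) (Set.range c) :=
  IsMaxChain.range_fin_of_covBy hc.1 hc.last_eq_top (fun k => (hc.2 k).wcovBy)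

/-- the coordinate that changes at step `k` -/
noncomputable def word {c} (hc : IsPath (n := n) (m := m) c) (k : Fin (m*n)) : Fin n :=
  (covby_iff.1 (hc.2 k)).choose

lemma word_spec {c} (hc : IsPath (n := n) (m := m) c) (k : Fin (m*n)) :
    ((c k.succ (word hc k) : ℕ) = (c k.castSucc (word hc k) : ℕ) + 1 ∧
      ∀ j, j ≠ word hc k → c k.castSucc j = c k.succ j) :=
  (covby_iff.1 (hc.2 k)).choose_spec

lemma filter_step (p : Fin (m*n) → Prop) [DecidablePred p] (k : Fin (m*n)) :
    (univ.filter fun j => j.val < k.val + 1 ∧ p j).card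
      = (univ.filter fun j => j.val < k.val ∧ p j).card + (if p k then 1 else 0) := by
  have hsplit : (univ.filter fun j : Fin (m*n) => j.val < k.val + 1 ∧ p j)
      = (univ.filter fun j => j.val < k.val ∧ p j) ∪ (univ.filter fun j => j = k ∧ p j) := by
    ext j
    simp only [mem_filter, mem_univ, true_and, mem_union]
    constructor
    · rintro ⟨h1, h2⟩
      rcases Nat.lt_succ_iff_lt_or_eq.1 h1 with h | h
      · exact Or.inl ⟨h, h2⟩
      · exact Or.inr ⟨Fin.ext h, h2⟩
    · rintro (⟨h1, h2⟩ | ⟨rfl, h2⟩)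
      · exact ⟨Nat.lt_succ_of_lt h1, h2⟩
      · exact ⟨Nat.lt_succ_self _, h2⟩
  have hdisj : Disjoint (univ.filter fun j : Fin (m*n) => j.val < k.val ∧ p j)
      (univ.filter fun j => j = k ∧ p j) := by
    rw [Finset.disjoint_left]
    rintro j hj1 hj2
    simp only [mem_filter] at hj1 hj2
    obtain ⟨-, rfl, -⟩ := hj2
    exact absurd hj1.2.1 (lt_irrefl _)
  rw [hsplit, Finset.card_union_of_disjoint hdisj]
  congr 1
  split_ifs with hp
  · rw [show (univ.filter fun j : Fin (m*n) => j = k ∧ p j) = {k} by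
      ext j; simp +contextual [hp]]
    simp
  · rw [show (univ.filter fun j : Fin (m*n) => j = k ∧ p j) = ∅ by
      ext j; simp +contextual [hp]]
    simp

lemma count_lemma {c} (hc : IsPath (n := n) (m := m) c) (k : Fin (m*n+1)) (i : Fin n) :
    (c k i : ℕ) = (univ.filter (fun j : Fin (m*n) => j.val < k.val ∧ word hc j = i)).card := by
  induction k using Fin.induction with
  | zero =>
    rw [hc.1]
    simp [Fin.bot_eq_zero]
  | succ k ih =>
    have hstep := filter_step (fun j => word hc j = i) k
    simp only [Fin.val_succ]
    simp only [Fin.coe_castSucc] at ih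
    rw [hstep, ← ih]
    rcases eq_or_ne (word hc k) i with hw | hw
    · rw [if_pos hw, ← hw, (word_spec hc k).1]
    · rw [if_neg hw, ((word_spec hc k).2 i (fun h => hw h.symm))]
      simp

lemma word_count {c} (hc : IsPath (n := n) (m := m) c) (i : Fin n) :
    (univ.filter (fun j => word hc j = i)).card = m := by
  have h := count_lemma hc (Fin.last _) i
  rw [hc.last_eq_top] at h
  simp only [Fin.top_eq_last, Pi.top_apply, Fin.val_last] at h
  have heq : (univ.filter fun j : Fin (m*n) => j.val < m*n ∧ word hc j = i)
      = univ.filter (fun j => word hc j = i) := by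
    apply Finset.filter_congr
    intro j _
    simp [j.isLt]
  rw [heq] at h
  exact h.symm


/-! ### From words to paths -/

def cnt (w : Fin (m*n) → Fin n) (k : ℕ) (i : Fin n) : ℕ :=
  (univ.filter (fun j : Fin (m*n) => j.val < k ∧ w j = i)).card

lemma cnt_le {w : Fin (m*n) → Fin n} (hw : ∀ i, (univ.filter (w · = i)).card = m)
    (k : ℕ) (i : Fin n) : cnt w k i ≤ m := by
  have hsub : (univ.filter (fun j : Fin (m*n) => j.val < k ∧ w j = i))
      ⊆ univ.filter (w · = i) := by
    intro j hj
    simp only [mem_filter] at hj ⊢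
    exact ⟨hj.1, hj.2.2⟩
  exact (Finset.card_le_card hsub).trans_eq (hw i)

def wordToPath (w : Fin (m*n) → Fin n) (hw : ∀ i, (univ.filter (w · = i)).card = m) :
    Fin (m*n+1) → Fin n → Fin (m+1) :=
  fun k i => ⟨cnt w k.val i, Nat.lt_succ_of_le (cnt_le hw _ _)⟩

lemma cnt_succ (w : Fin (m*n) → Fin n) (k : Fin (m*n)) (i : Fin n) :
    cnt w (k.val+1) i = cnt w k.val i + if w k = i then 1 else 0 :=
  filter_step (fun j => w j = i) k

lemma wordToPath_isPath {w : Fin (m*n) → Fin n}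
    (hw : ∀ i, (univ.filter (w · = i)).card = m) : IsPath (wordToPath w hw) := by
  constructor
  · funext i
    apply Fin.ext
    simp [wordToPath, cnt, Fin.bot_eq_zero]
  · intro k
    rw [covby_iff]
    refine ⟨w k, ?_, ?_⟩
    · show cnt w (k.succ.val) (w k) = cnt w (k.castSucc.val) (w k) + 1
      rw [Fin.val_succ, Fin.coe_castSucc, cnt_succ, if_pos rfl]
    · intro j hj
      apply Fin.ext
      show cnt w (k.castSucc.val) j = cnt w (k.succ.val) j
      rw [Fin.val_succ, Fin.coe_castSucc, cnt_succ, if_neg (fun h => hj h.symm)]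
      omega

lemma word_wordToPath {w : Fin (m*n) → Fin n}
    (hw : ∀ i, (univ.filter (w · = i)).card = m) (k : Fin (m*n)) :
    word (wordToPath_isPath hw) k = w k := by
  by_contra hne
  have h2 := (word_spec (wordToPath_isPath hw) k).2 (w k) (fun h => hne h.symm)
  have h3 : cnt w (k.castSucc.val) (w k) = cnt w (k.succ.val) (w k) :=
    congrArg Fin.val h2
  rw [Fin.val_succ, Fin.coe_castSucc, cnt_succ, if_pos rfl] at h3
  omega

/-! ### The three types -/

abbrev Chains (n m : ℕ) := {C : Set (Fin n → Fin (m+1)) // IsMaxChain (· ≤ ·) C}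
abbrev Paths (n m : ℕ) := {c : Fin (m*n+1) → Fin n → Fin (m+1) // IsPath c}
abbrev Words (n m : ℕ) := {w : Fin (m*n) → Fin n // ∀ i, (univ.filter (w · = i)).card = m}

noncomputable def pathToWord : Paths n m → Words n m :=
  fun c => ⟨word c.2, word_count c.2⟩

lemma pathToWord_bij : Function.Bijective (pathToWord (n := n) (m := m)) := by
  constructor
  · rintro ⟨c, hc⟩ ⟨c', hc'⟩ h
    simp only [pathToWord, Subtype.mk.injEq] at h ⊢
    funext k i
    apply Fin.ext
    rw [count_lemma hc k i, count_lemma hc' k i, h]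
  · rintro ⟨w, hw⟩
    exact ⟨⟨wordToPath w hw, wordToPath_isPath hw⟩,
      Subtype.ext (funext fun k => word_wordToPath hw k)⟩


/-! ### From maximal chains to paths -/

lemma adjacent_covby {C : Set (Fin n → Fin (m+1))} (hC : IsMaxChain (· ≤ ·) C)
    {a b : Fin n → Fin (m+1)} (ha : a ∈ C) (hb : b ∈ C) (hab : a < b)
    (hbetween : ∀ x ∈ C, ¬(a < x ∧ x < b)) : a ⋖ b := by
  by_contra h
  obtain ⟨z, haz, hzb⟩ := (not_covBy_iff hab).1 h
  have hzC : z ∉ C := fun hz => hbetween z hz ⟨haz, hzb⟩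
  have hchain : IsChain (· ≤ ·) (insert z C) := by
    apply hC.1.insert
    intro y hy _
    rcases eq_or_ne y a with rfl | hya
    · exact Or.inr haz.le
    rcases eq_or_ne y b with rfl | hyb
    · exact Or.inl hzb.le
    rcases hC.1.total ha hy with h1 | h1
    · rcases hC.1.total hy hb with h2 | h2
      · exact absurd ⟨lt_of_le_of_ne h1 (Ne.symm hya), lt_of_le_of_ne h2 hyb⟩ (hbetween y hy)
      · exact Or.inl (hzb.le.trans h2)
    · exact Or.inr (h1.trans haz.le)
  have heq := hC.2 hchain (Set.subset_insert z C)
  have : z ∈ C := by rw [heq]; exact Set.mem_insert z C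
  exact hzC this

lemma exists_path {C : Set (Fin n → Fin (m+1))} (hC : IsMaxChain (· ≤ ·) C) :
    ∃ c : Fin (m*n+1) → Fin n → Fin (m+1), IsPath c ∧ Set.range c = C := by
  classical
  letI : LinearOrder ↥C :=
    { Subtype.partialOrder _ with
      le_total := fun x y => hC.1.total x.2 y.2
      toDecidableLE := Classical.decRel _ }
  letI : Fintype ↥C := Fintype.ofFinite ↥C
  have hne : Nonempty ↥C := ⟨⟨⊥, hC.bot_mem⟩⟩
  have hpos : Fintype.card ↥C ≠ 0 := Fintype.card_ne_zero
  obtain ⟨K, hK⟩ : ∃ K, Fintype.card ↥C = K + 1 :=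
    ⟨_, (Nat.succ_pred_eq_of_pos (Nat.pos_of_ne_zero hpos)).symm⟩
  set e := monoEquivOfFin ↥C hK with he
  have hmem : ∀ k, ((e k : ↥C) : Fin n → Fin (m+1)) ∈ C := fun k => (e k).2
  have hadj : ∀ k : Fin K,
      ((e k.castSucc : ↥C) : Fin n → Fin (m+1)) ⋖ ((e k.succ : ↥C) : Fin n → Fin (m+1)) := by
    intro k
    apply adjacent_covby hC (hmem _) (hmem _)
    · exact e.strictMono (Fin.castSucc_lt_succ : k.castSucc < k.succ)
    · rintro x hx ⟨h1, h2⟩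
      have hej : e (e.symm ⟨x, hx⟩) = ⟨x, hx⟩ := e.apply_symm_apply _
      have hl : k.castSucc < e.symm ⟨x, hx⟩ := by
        rw [← e.lt_iff_lt, hej]
        exact h1
      have hr : e.symm ⟨x, hx⟩ < k.succ := by
        rw [← e.lt_iff_lt, hej]
        exact h2
      rw [Fin.lt_def] at hl hr
      simp only [Fin.coe_castSucc, Fin.val_succ] at hl hr
      omega
  have h0 : ((e 0 : ↥C) : Fin n → Fin (m+1)) = ⊥ := by
    have hb : (⊥ : Fin n → Fin (m+1)) ∈ C := hC.bot_mem
    have h1 : e 0 ≤ e (e.symm ⟨⊥, hb⟩) := e.monotone (Fin.zero_le _)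
    rw [e.apply_symm_apply] at h1
    exact le_bot_iff.1 h1
  have hrk : ∀ k : Fin (K+1), rk ((e k : ↥C) : Fin n → Fin (m+1)) = k.val := by
    intro k
    induction k using Fin.induction with
    | zero => rw [h0, rk_bot]; rfl
    | succ k ih =>
      rw [rk_covby (hadj k)]
      simp only [Fin.coe_castSucc] at ih
      simp [ih]
  have hlast : ((e (Fin.last K) : ↥C) : Fin n → Fin (m+1)) = ⊤ := by
    have ht : (⊤ : Fin n → Fin (m+1)) ∈ C := hC.top_mem
    have h1 : e (e.symm ⟨⊤, ht⟩) ≤ e (Fin.last K) := e.monotone (Fin.le_last _)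
    rw [e.apply_symm_apply] at h1
    exact top_le_iff.1 h1
  have hKval : K = m * n := by
    have h1 := hrk (Fin.last K)
    rw [hlast, rk_top] at h1
    simpa using h1.symm
  subst hKval
  refine ⟨fun k => ((e k : ↥C) : Fin n → Fin (m+1)), ⟨h0, hadj⟩, ?_⟩
  ext x
  constructor
  · rintro ⟨k, rfl⟩
    exact hmem k
  · intro hx
    exact ⟨e.symm ⟨x, hx⟩, congrArg Subtype.val (e.apply_symm_apply ⟨x, hx⟩)⟩

def pathToChain : Paths n m → Chains n m := fun c => ⟨Set.range c.1, c.2.maxChain⟩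

lemma pathToChain_bij : Function.Bijective (pathToChain (n := n) (m := m)) := by
  constructor
  · rintro ⟨c, hc⟩ ⟨c', hc'⟩ h
    simp only [pathToChain, Subtype.mk.injEq] at h ⊢
    funext k
    have hmem : c' k ∈ Set.range c := h ▸ Set.mem_range_self k
    obtain ⟨j, hj⟩ := hmem
    have hr : (j : ℕ) = (k : ℕ) := by
      have h1 := hc.rk_apply j
      have h2 := hc'.rk_apply k
      rw [hj] at h1
      omega
    rw [← hj, Fin.ext hr]
  · rintro ⟨C, hCmax⟩
    obtain ⟨c, hc, hrange⟩ := exists_path hCmax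
    exact ⟨⟨c, hc⟩, Subtype.ext hrange⟩


/-! ### Counting words -/

def phi (σ : Equiv.Perm (Fin (m*n))) : Fin (m*n) → Fin n :=
  fun j => (finProdFinEquiv.symm (σ j)).2

lemma phi_count (σ : Equiv.Perm (Fin (m*n))) (i : Fin n) :
    (univ.filter (fun j => phi σ j = i)).card = m := by
  classical
  rw [← Fintype.card_subtype]
  have e1 : {j : Fin (m*n) // phi σ j = i} ≃ {p : Fin m × Fin n // p.2 = i} :=
    Equiv.subtypeEquiv ((σ : Fin (m*n) ≃ Fin (m*n)).trans finProdFinEquiv.symm)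
      (fun j => Iff.rfl)
  have e2 : {p : Fin m × Fin n // p.2 = i} ≃ Fin m :=
    { toFun := fun p => p.1.1
      invFun := fun a => ⟨(a, i), rfl⟩
      left_inv := by rintro ⟨⟨a, b⟩, rfl⟩; rfl
      right_inv := fun a => rfl }
  rw [Fintype.card_congr (e1.trans e2), Fintype.card_fin]

lemma key {w : Fin (m*n) → Fin n} (E : (i : Fin n) → ({j : Fin (m*n) // w j = i} ≃ Fin m))
    (i : Fin n) (j : Fin (m*n)) (h : w j = i) : E (w j) ⟨j, rfl⟩ = E i ⟨j, h⟩ := by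
  subst h; rfl

lemma hcard_fiber {w : Fin (m*n) → Fin n} (hw : ∀ i, (univ.filter (w · = i)).card = m)
    (i : Fin n) : Fintype.card {j : Fin (m*n) // w j = i} = m := by
  rw [Fintype.card_subtype]; exact hw i

noncomputable def fiberEquiv (w : Fin (m*n) → Fin n)
    (hw : ∀ i, (univ.filter (w · = i)).card = m) :
    {σ : Equiv.Perm (Fin (m*n)) // phi σ = w}
      ≃ ((i : Fin n) → ({j : Fin (m*n) // w j = i} ≃ Fin m)) where
  toFun := fun σh i => Equiv.ofBijective
    (fun jh => (finProdFinEquiv.symm (σh.1 jh.1)).1)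
    (by
      rw [Fintype.bijective_iff_injective_and_card]
      constructor
      · rintro ⟨a, ha⟩ ⟨b, hb⟩ hab
        simp only at hab
        have h2 : (finProdFinEquiv.symm (σh.1 a)).2 = (finProdFinEquiv.symm (σh.1 b)).2 := by
          rw [show (finProdFinEquiv.symm (σh.1 a)).2 = w a from congrFun σh.2 a,
            show (finProdFinEquiv.symm (σh.1 b)).2 = w b from congrFun σh.2 b, ha, hb]
        have h3 : σh.1 a = σh.1 b :=
          finProdFinEquiv.symm.injective (Prod.ext hab h2)
        exact Subtype.ext (σh.1.injective h3)
      · rw [hcard_fiber hw, Fintype.card_fin])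
  invFun := fun E =>
    ⟨Equiv.ofBijective (fun j => finProdFinEquiv (E (w j) ⟨j, rfl⟩, w j))
      (Finite.injective_iff_bijective.1 (by
        intro j j' hjj
        have h1 := congrArg finProdFinEquiv.symm hjj
        simp only [Equiv.symm_apply_apply] at h1
        have hsnd : w j = w j' := congrArg Prod.snd h1
        have hfst : E (w j) ⟨j, rfl⟩ = E (w j') ⟨j', rfl⟩ := congrArg Prod.fst h1
        rw [key E (w j) j' hsnd.symm] at hfst
        have h4 := (E (w j)).injective hfst
        exact congrArg Subtype.val h4)),
      funext fun j => by simp [phi]⟩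
  left_inv := by
    rintro ⟨σ, hσ⟩
    apply Subtype.ext
    apply Equiv.ext
    intro j
    show finProdFinEquiv ((finProdFinEquiv.symm (σ j)).1, w j) = σ j
    rw [show w j = (finProdFinEquiv.symm (σ j)).2 from (congrFun hσ j).symm]
    exact finProdFinEquiv.apply_symm_apply _
  right_inv := by
    intro E
    funext i
    apply Equiv.ext
    rintro ⟨j, hj⟩
    show (finProdFinEquiv.symm (finProdFinEquiv (E (w j) ⟨j, rfl⟩, w j))).1 = E i ⟨j, hj⟩
    rw [Equiv.symm_apply_apply]
    exact key E i j hj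

lemma card_fiber {w : Fin (m*n) → Fin n} (hw : ∀ i, (univ.filter (w · = i)).card = m) :
    Fintype.card {σ : Equiv.Perm (Fin (m*n)) // phi σ = w} = m.factorial ^ n := by
  rw [Fintype.card_congr (fiberEquiv w hw), Fintype.card_pi]
  have h : ∀ i : Fin n, Fintype.card ({j : Fin (m*n) // w j = i} ≃ Fin m) = m.factorial := by
    intro i
    have e : {j : Fin (m*n) // w j = i} ≃ Fin m :=
      Fintype.equivFinOfCardEq (hcard_fiber hw i)
    rw [Fintype.card_equiv e, hcard_fiber hw i]
  rw [Finset.prod_congr rfl (fun i _ => h i), Finset.prod_const, Finset.card_univ,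
    Fintype.card_fin]

noncomputable def phiW : Equiv.Perm (Fin (m*n)) → Words n m :=
  fun σ => ⟨phi σ, phi_count σ⟩

lemma card_words : Fintype.card (Words n m) * m.factorial ^ n = (m*n).factorial := by
  classical
  have h1 : (univ : Finset (Equiv.Perm (Fin (m*n)))).card
      = ∑ w : Words n m, (univ.filter (fun σ : Equiv.Perm (Fin (m*n)) => phiW σ = w)).card :=
    Finset.card_eq_sum_card_fiberwise (fun σ _ => mem_univ _)
  rw [Finset.card_univ, Fintype.card_perm, Fintype.card_fin] at h1
  have h2 : ∀ w : Words n m,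
      (univ.filter (fun σ : Equiv.Perm (Fin (m*n)) => phiW σ = w)).card = m.factorial ^ n := by
    intro w
    rw [← Fintype.card_subtype]
    rw [Fintype.card_congr (Equiv.subtypeEquivRight (fun σ => by
      constructor
      · intro h; exact congrArg Subtype.val h
      · intro h; exact Subtype.ext h))]
    exact card_fiber w.2
  rw [Finset.sum_congr rfl (fun w _ => h2 w), Finset.sum_const, Finset.card_univ,
    smul_eq_mul] at h1
  exact h1.symm

end Stmt7

/-- The number of maximal chains of the `n`-fold power of the `(m+1)`-element chain,
i.e. of `Fin n → Fin (m+1)` with the pointwise order, is `(mn)!/(m!)^n`. -/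
theorem stmt_7 (n m : ℕ) :
    Nat.card {C : Set (Fin n → Fin (m + 1)) // IsMaxChain (· ≤ ·) C}
      * Nat.factorial m ^ n = Nat.factorial (m * n) := by
  have h1 : Nat.card (Stmt7.Chains n m) = Nat.card (Stmt7.Paths n m) :=
    (Nat.card_eq_of_bijective _ Stmt7.pathToChain_bij).symm
  have h2 : Nat.card (Stmt7.Paths n m) = Nat.card (Stmt7.Words n m) :=
    Nat.card_eq_of_bijective _ Stmt7.pathToWord_bij
  have h3 : Nat.card (Stmt7.Words n m) = Fintype.card (Stmt7.Words n m) :=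
    Nat.card_eq_fintype_card
  show Nat.card (Stmt7.Chains n m) * _ = _
  rw [h1, h2, h3, Stmt7.card_words]
end

section
/- Let k, n, m be natural numbers, and for x, y : Fin n → Fin (k+m+1) say that x satisfies condition (∗) if for every index i with i+1 < n, whenever (x(i+1) : ℕ) < k one has x(i) ≤ x(i+1). If x and y both satisfy (∗), then the pointwise minimum i ↦ min (x i) (y i) and the pointwise maximum i ↦ max (x i) (y i) both satisfy (∗). Consequently, the elements of the lattice (Fin n → Fin (k+m+1)) (pointwise order) satisfying (∗) form a sublattice (closed under binary meets and joins). -/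
/-- Condition (∗) with parameter `k` on a tuple `x : Fin n → Fin r`:
for each `i` with `i+1 < n`, if `(x (i+1) : ℕ) < k` then `x i ≤ x (i+1)`. -/
def StarCond (k : ℕ) {n r : ℕ} (x : Fin n → Fin r) : Prop :=
  ∀ (i : ℕ) (h : i + 1 < n), ((x ⟨i + 1, h⟩ : ℕ) < k) →
    x ⟨i, Nat.lt_of_succ_lt h⟩ ≤ x ⟨i + 1, h⟩

theorem starMin {k n r : ℕ} {x y : Fin n → Fin r}
    (hx : StarCond k x) (hy : StarCond k y) :
    StarCond k (fun i => min (x i) (y i)) := by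
  intro i h hk
  set j : Fin n := ⟨i, Nat.lt_of_succ_lt h⟩
  set j1 : Fin n := ⟨i+1, h⟩
  simp only [Fin.le_def, Fin.lt_def, Fin.coe_min] at hk ⊢
  have h1 : (x j : ℕ) ≤ x j1 ∨ k ≤ x j1 := by
    rcases lt_or_ge ((x j1 : ℕ)) k with hxk | hxk
    · exact Or.inl (hx i h hxk)
    · exact Or.inr hxk
  have h2 : (y j : ℕ) ≤ y j1 ∨ k ≤ y j1 := by
    rcases lt_or_ge ((y j1 : ℕ)) k with hyk | hyk
    · exact Or.inl (hy i h hyk)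
    · exact Or.inr hyk
  omega

theorem starMax {k n r : ℕ} {x y : Fin n → Fin r}
    (hx : StarCond k x) (hy : StarCond k y) :
    StarCond k (fun i => max (x i) (y i)) := by
  intro i h hk
  simp only [Fin.le_def, Fin.lt_def, Fin.coe_max] at hk ⊢
  have h1 := hx i h (by omega)
  have h2 := hy i h (by omega)
  simp only [Fin.le_def] at h1 h2
  omega

/-- The tuples in `Fin n → Fin (k+m+1)` satisfying condition (∗) are closed under
pointwise minima and maxima, hence under the binary meets and joins of the lattice
`Fin n → Fin (k+m+1)` (pointwise order): they form a sublattice. -/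
theorem stmt_8 (k n m : ℕ) (x y : Fin n → Fin (k + m + 1))
    (hx : StarCond k x) (hy : StarCond k y) :
    StarCond k (fun i => min (x i) (y i)) ∧ StarCond k (fun i => max (x i) (y i)) ∧
    StarCond k (x ⊓ y) ∧ StarCond k (x ⊔ y) := by
  exact ⟨starMin hx hy, starMax hx hy, starMin hx hy, starMax hx hy⟩
end

section
/- Let n and m be natural numbers. Form the concrete lax sum L of the sequence C^n_0 → C^n_1 → ... → C^n_m, where C^n_j = (Fin n → Fin (j+1)) with the pointwise order and each map C^n_j → C^n_{j+1} is the inclusion given by casting each coordinate from Fin (j+1) into Fin (j+2): L is the sigma type of pairs (j, x) with j ∈ Fin (m+1) and x : Fin n → Fin (j+1), ordered by (j, x) ≤ (l, y) iff j ≤ l and the cast of x into Fin n → Fin (l+1) is ≤ y pointwise. Then L is order-isomorphic to the subposet of (Fin (n+1) → Fin (m+1)) (pointwise order) consisting of those tuples x with x(i) ≤ x(n) for all i < n. -/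
private lemma sig_ext_aux {m n : ℕ} :
    ∀ {a b : Σ j : Fin (m + 1), (Fin n → Fin ((j : ℕ) + 1))},
      ((a.1 : ℕ) = (b.1 : ℕ)) → (∀ i, ((a.2 i : ℕ)) = ((b.2 i : ℕ))) → a = b := by
  rintro ⟨⟨j, hj⟩, x⟩ ⟨⟨l, hl⟩, y⟩ h1 h2
  dsimp at h1 h2
  subst h1
  exact Sigma.ext rfl (heq_of_eq (funext fun i => Fin.ext (h2 i)))

/-- The concrete lax sum of `C^n_0 → C^n_1 → ⋯ → C^n_m` (maps casting each coordinate
into the larger chain), i.e. the sigma type `Σ j : Fin (m+1), Fin n → Fin (j+1)` ordered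
by `(j, x) ≤ (l, y)` iff `j ≤ l` and the cast of `x` into `Fin n → Fin (l+1)` is `≤ y`
pointwise, is order-isomorphic to the subposet of `Fin (n+1) → Fin (m+1)` (pointwise
order) of tuples with `x i ≤ x n` for all `i < n`. -/
theorem stmt_11 (n m : ℕ) :
    ∃ e : (Σ j : Fin (m + 1), (Fin n → Fin ((j : ℕ) + 1))) ≃
        {x : Fin (n + 1) → Fin (m + 1) //
          ∀ i : Fin (n + 1), (i : ℕ) < n → x i ≤ x ⟨n, Nat.lt_succ_self n⟩},
      ∀ a b : Σ j : Fin (m + 1), (Fin n → Fin ((j : ℕ) + 1)),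
        (∃ h : (a.1 : ℕ) ≤ (b.1 : ℕ),
            ∀ i, Fin.castLE (Nat.succ_le_succ h) (a.2 i) ≤ b.2 i) ↔ e a ≤ e b := by
  refine ⟨⟨fun a => ⟨fun i => if h : (i : ℕ) < n then
      ⟨(a.2 ⟨i, h⟩ : ℕ), by have := (a.2 ⟨i, h⟩).isLt; have := a.1.isLt; omega⟩
      else a.1, ?_⟩,
    fun x => ⟨x.1 ⟨n, Nat.lt_succ_self n⟩, fun i =>
      ⟨(x.1 ⟨i, by omega⟩ : ℕ), by
        have := x.2 ⟨i, by omega⟩ i.isLt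
        exact Nat.lt_succ_of_le (Fin.le_def.mp this)⟩⟩,
    ?_, ?_⟩, ?_⟩
  · intro i hi
    simp only [Fin.le_def, dif_pos hi, dif_neg (lt_irrefl n)]
    exact Nat.lt_succ_iff.mp (a.2 ⟨i, hi⟩).isLt
  · rintro ⟨j, x⟩
    refine sig_ext_aux ?_ fun i => ?_
    · simp [dif_neg (lt_irrefl n)]
    · simp [dif_pos i.isLt]
  · rintro ⟨x, hx⟩
    refine Subtype.ext (funext fun i => Fin.ext ?_)
    by_cases h : (i : ℕ) < n
    · simp [dif_pos h]
    · simp only [dif_neg h]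
      exact congrArg (fun z => ((x z : Fin (m + 1)) : ℕ))
        (Fin.ext (by have := i.isLt; simp only [] ; omega))
  · intro a b
    simp only [Equiv.coe_fn_mk]
    rw [Subtype.mk_le_mk, Pi.le_def]
    constructor
    · rintro ⟨h, hab⟩ i
      by_cases hi : (i : ℕ) < n
      · have := hab ⟨i, hi⟩
        simp only [Fin.le_def, Fin.coe_castLE] at this
        simp only [Fin.le_def, dif_pos hi]
        exact this
      · simp only [Fin.le_def, dif_neg hi]
        exact h
    · intro h
      have hn := h ⟨n, Nat.lt_succ_self n⟩
      simp only [Fin.le_def, dif_neg (lt_irrefl n)] at hn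
      refine ⟨hn, fun i => ?_⟩
      have hi := h ⟨(i : ℕ), Nat.lt_succ_of_lt i.isLt⟩
      simp only [Fin.le_def, dif_pos i.isLt] at hi
      simpa [Fin.le_def] using hi
end

section
/- Let M : ℕ → Type be a family of posets each having binary meets (each M i a meet-semilattice), and f : ∀ i, M i → M (i+1) a family of monotone maps each of which is order-reflecting and has down-closed image. Let L n be the concrete lax sum of M 0 → ... → M n (pairs (j, x) with (j, x) ≤ (l, y) iff j ≤ l and F_{j,l}(x) ≤ y, F_{j,l} the composite of the f's). Then L n has binary meets; explicitly, for (x, j) and (y, l) with j ≤ l, there exists a (necessarily unique) z' ∈ M j with F_{j,l}(z') = F_{j,l}(x) ⊓ y, and the element (z', j) is the greatest lower bound of {(x, j), (y, l)} in L n. Moreover each embedding ι_j : M j → L n preserves binary meets. -/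
/-- The composite `F_{j,l} = f_{l-1} ∘ ⋯ ∘ f_j : M j → M l` (identity when `j = l`). -/
def laxF {M : ℕ → Type} (f : ∀ i, M i → M (i + 1)) (j : ℕ) (x : M j) :
    ∀ l, j ≤ l → M l
  | 0, h => (Nat.le_zero.mp h) ▸ x
  | l + 1, h =>
    if he : j = l + 1 then he ▸ x
    else f l (laxF f j x l (Nat.lt_succ_iff.mp (lt_of_le_of_ne h he)))

/-- The concrete lax sum of the sequence `M 0 → M 1 → ⋯ → M n`:
pairs `(j, x)` with `j ∈ Fin (n+1)` and `x ∈ M j`. -/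
abbrev LaxSum (M : ℕ → Type) (n : ℕ) : Type := Σ j : Fin (n + 1), M (j : ℕ)

/-- The lax sum order: `(j, x) ≤ (l, y)` iff `j ≤ l` and `F_{j,l}(x) ≤ y`. -/
def laxLE {M : ℕ → Type} [∀ i, PartialOrder (M i)] (f : ∀ i, M i → M (i + 1)) {n : ℕ}
    (a b : LaxSum M n) : Prop :=
  ∃ h : (a.1 : ℕ) ≤ (b.1 : ℕ), laxF f (a.1 : ℕ) a.2 (b.1 : ℕ) h ≤ b.2

/-- The canonical map `f'_n : L n → L (n+1)`, `(j, x) ↦ (j, x)`. -/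
def stepMap {M : ℕ → Type} {n : ℕ} (a : LaxSum M n) : LaxSum M (n + 1) :=
  ⟨⟨(a.1 : ℕ), Nat.lt_succ_of_lt a.1.isLt⟩, a.2⟩

/-- The canonical map `ι_j : M j → L n`, `x ↦ (j, x)`, for `j ≤ n`. -/
def laxIota {M : ℕ → Type} {n : ℕ} (j : ℕ) (h : j ≤ n) (x : M j) : LaxSum M n :=
  ⟨⟨j, Nat.lt_succ_of_le h⟩, x⟩

/-- `s` is the greatest lower bound of `{a, b}` in the lax sum order. -/
def IsLaxGLB {M : ℕ → Type} [∀ i, PartialOrder (M i)] (f : ∀ i, M i → M (i + 1)) {n : ℕ}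
    (a b s : LaxSum M n) : Prop :=
  laxLE f s a ∧ laxLE f s b ∧ ∀ c : LaxSum M n, laxLE f c a → laxLE f c b → laxLE f c s


section Helpers

variable {M : ℕ → Type}

theorem laxF_refl (f : ∀ i, M i → M (i + 1)) (j : ℕ) (x : M j) (h : j ≤ j) :
    laxF f j x j h = x := by
  cases j <;> · rw [laxF]; try rw [dif_pos rfl]

theorem laxF_succ (f : ∀ i, M i → M (i + 1)) (j l : ℕ) (hjl : j ≤ l) (h : j ≤ l + 1)
    (x : M j) : laxF f j x (l + 1) h = f l (laxF f j x l hjl) := by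
  rw [laxF, dif_neg (by omega)]

variable [∀ i, SemilatticeInf (M i)] (f : ∀ i, M i → M (i + 1))

theorem laxF_trans (j k : ℕ) (hjk : j ≤ k) (x : M j) :
    ∀ l (hkl : k ≤ l), laxF f k (laxF f j x k hjk) l hkl = laxF f j x l (hjk.trans hkl) := by
  intro l
  induction l with
  | zero =>
    intro hkl
    obtain rfl := Nat.le_zero.mp hkl
    obtain rfl := Nat.le_zero.mp hjk
    simp [laxF_refl]
  | succ l ih =>
    intro hkl
    rcases eq_or_lt_of_le hkl with he | hlt
    · subst he; rw [laxF_refl]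
    · have hkl' : k ≤ l := Nat.lt_succ_iff.mp hlt
      rw [laxF_succ f k l hkl', laxF_succ f j l (hjk.trans hkl'), ih hkl']

theorem laxF_mono (hf : ∀ i, Monotone (f i)) (j : ℕ) (x y : M j) (hxy : x ≤ y) :
    ∀ l (h : j ≤ l), laxF f j x l h ≤ laxF f j y l h := by
  intro l
  induction l with
  | zero =>
    intro h; obtain rfl := Nat.le_zero.mp h
    rw [laxF_refl, laxF_refl]; exact hxy
  | succ l ih =>
    intro h
    rcases eq_or_lt_of_le h with he | hlt
    · subst he; rw [laxF_refl, laxF_refl]; exact hxy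
    · have hjl : j ≤ l := Nat.lt_succ_iff.mp hlt
      rw [laxF_succ f j l hjl, laxF_succ f j l hjl]
      exact hf l (ih hjl)

theorem laxF_reflect (hrefl : ∀ i (a b : M i), f i a ≤ f i b → a ≤ b) (j : ℕ) (x y : M j) :
    ∀ l (h : j ≤ l), laxF f j x l h ≤ laxF f j y l h → x ≤ y := by
  intro l
  induction l with
  | zero =>
    intro h hle; obtain rfl := Nat.le_zero.mp h
    rwa [laxF_refl, laxF_refl] at hle
  | succ l ih =>
    intro h hle
    rcases eq_or_lt_of_le h with he | hlt
    · subst he; rwa [laxF_refl, laxF_refl] at hle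
    · have hjl : j ≤ l := Nat.lt_succ_iff.mp hlt
      rw [laxF_succ f j l hjl, laxF_succ f j l hjl] at hle
      exact ih hjl (hrefl l _ _ hle)

theorem laxF_dc (hrefl : ∀ i (a b : M i), f i a ≤ f i b → a ≤ b)
    (hdc : ∀ i (y : M (i + 1)) (x : M i), y ≤ f i x → ∃ z : M i, f i z = y)
    (j : ℕ) : ∀ l (h : j ≤ l) (x : M j) (y : M l), y ≤ laxF f j x l h →
      ∃ z : M j, laxF f j z l h = y := by
  intro l
  induction l with
  | zero =>
    intro h x y hle; obtain rfl := Nat.le_zero.mp h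
    exact ⟨y, laxF_refl f 0 y h⟩
  | succ l ih =>
    intro h x y hle
    rcases eq_or_lt_of_le h with he | hlt
    · subst he; exact ⟨y, laxF_refl f _ y h⟩
    · have hjl : j ≤ l := Nat.lt_succ_iff.mp hlt
      rw [laxF_succ f j l hjl] at hle
      obtain ⟨z1, hz1⟩ := hdc l y (laxF f j x l hjl) hle
      have hz1le : z1 ≤ laxF f j x l hjl := hrefl l _ _ (hz1 ▸ hle)
      obtain ⟨z, hz⟩ := ih hjl x z1 hz1le
      exact ⟨z, by rw [laxF_succ f j l hjl, hz, hz1]⟩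

end Helpers

/-- If each `M i` is a meet-semilattice and each `f i` is monotone, order-reflecting and
has down-closed image, then the concrete lax sum `L n` has binary meets; explicitly, for
`j ≤ l` there is a (necessarily unique) `z' ∈ M j` with `F_{j,l}(z') = F_{j,l}(x) ⊓ y`,
and `(j, z')` is the greatest lower bound of `{(j, x), (l, y)}`. Moreover each `ι_j`
preserves binary meets. -/
theorem stmt_15 (M : ℕ → Type) [∀ i, SemilatticeInf (M i)] (f : ∀ i, M i → M (i + 1))
    (hf : ∀ i, Monotone (f i))
    (hrefl : ∀ i (a b : M i), f i a ≤ f i b → a ≤ b)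
    (hdc : ∀ i (y : M (i + 1)) (x : M i), y ≤ f i x → ∃ z : M i, f i z = y)
    (n : ℕ) :
    -- explicit formula for the meet
    (∀ (j l : Fin (n + 1)) (h : (j : ℕ) ≤ (l : ℕ)) (x : M (j : ℕ)) (y : M (l : ℕ)),
        ∃ z' : M (j : ℕ), laxF f (j : ℕ) z' (l : ℕ) h = laxF f (j : ℕ) x (l : ℕ) h ⊓ y ∧
          IsLaxGLB f ⟨j, x⟩ ⟨l, y⟩ (⟨j, z'⟩ : LaxSum M n)) ∧
    -- L n has binary meets
    (∀ a b : LaxSum M n, ∃ s, IsLaxGLB f a b s) ∧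
    -- each ι_j preserves binary meets
    (∀ (j : ℕ) (h : j ≤ n) (x y : M j),
        IsLaxGLB f (laxIota j h x) (laxIota j h y) (laxIota j h (x ⊓ y))) := by
  have key : ∀ (j l : Fin (n + 1)) (h : (j : ℕ) ≤ (l : ℕ)) (x : M (j : ℕ)) (y : M (l : ℕ)),
      ∃ z' : M (j : ℕ), laxF f (j : ℕ) z' (l : ℕ) h = laxF f (j : ℕ) x (l : ℕ) h ⊓ y ∧
        IsLaxGLB f ⟨j, x⟩ ⟨l, y⟩ (⟨j, z'⟩ : LaxSum M n) := by
    intro j l h x y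
    obtain ⟨z', hz'⟩ := laxF_dc f hrefl hdc (j : ℕ) (l : ℕ) h x
      (laxF f (j : ℕ) x (l : ℕ) h ⊓ y) inf_le_left
    refine ⟨z', hz', ?_, ?_, ?_⟩
    · exact ⟨le_rfl, by
        rw [laxF_refl]
        exact laxF_reflect f hrefl _ z' x _ h (hz' ▸ inf_le_left)⟩
    · exact ⟨h, hz' ▸ inf_le_right⟩
    · rintro ⟨k, w⟩ ⟨hkj, hwx⟩ ⟨hkl, hwy⟩
      refine ⟨hkj, ?_⟩
      refine laxF_reflect f hrefl _ _ z' _ h ?_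
      rw [laxF_trans f _ _ hkj w _ h, hz']
      refine le_inf ?_ ?_
      · exact (laxF_trans f _ _ hkj w _ h).symm ▸ laxF_mono f hf _ _ x hwx _ h
      · exact le_of_le_of_eq (le_of_eq rfl) rfl |>.trans hwy
  refine ⟨key, ?_, ?_⟩
  · rintro ⟨j, x⟩ ⟨l, y⟩
    rcases le_total (j : ℕ) (l : ℕ) with h | h
    · obtain ⟨z', _, hglb⟩ := key j l h x y
      exact ⟨⟨j, z'⟩, hglb⟩
    · obtain ⟨z', _, h1, h2, h3⟩ := key l j h y x
      exact ⟨⟨l, z'⟩, h2, h1, fun c hca hcb => h3 c hcb hca⟩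
  · intro j h x y
    refine ⟨⟨le_rfl, ?_⟩, ⟨le_rfl, ?_⟩, ?_⟩
    · show laxF f j (x ⊓ y) j _ ≤ x
      exact (laxF_refl f j (x ⊓ y) _).le.trans inf_le_left
    · show laxF f j (x ⊓ y) j _ ≤ y
      exact (laxF_refl f j (x ⊓ y) _).le.trans inf_le_right
    rintro ⟨k, w⟩ ⟨hkj, hwx⟩ ⟨hkj', hwy⟩
    exact ⟨hkj, le_inf hwx hwy⟩
end

section
/- Let n, k, m be natural numbers. Write C^{n+k⋆}_m for the subposet of (Fin (n+k) → Fin (m+1)) (pointwise order) of tuples x satisfying condition (⋆): x(i) ≤ x(n) for every i < n, and x(n) ≤ x(n+1) ≤ ... ≤ x(n+k−1). Define the top map α : C^{n+k⋆}_m → C^{n+k⋆}_{m+1} by casting each coordinate from Fin (m+1) into Fin (m+2) (same tuple, larger chain), and the left map δ : C^{n+k⋆}_m → C^{n+k+1⋆}_m by appending the maximal value m as a new last coordinate: δ(x) = (x(0), ..., x(n+k−1), m). Then: (1) α and δ are well-defined (land in the respective (⋆)-subposets), monotone, and order-reflecting; (2) the image of the induced left-bottom map C^{n+k⋆}_m →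 C^{n+k+1⋆}_{m+1} (append m, then cast) is below the image of the top-right map (cast, then append m+1) in the sense that δ followed by casting is pointwise ≤ casting followed by appending m+1; and (3) the square formed by δ (left), α (top), the map C^{n+k+1⋆}_m → C^{n+k+1⋆}_{m+1} given by casting (bottom), and the map C^{n+k⋆}_{m+1} → C^{n+k+1⋆}_{m+1} given by appending m+1 (right) is a lax pushout: the bottom map is order-reflecting with down-closed image, the right map is order-reflecting, their images are disjoint with union all of C^{n+k+1⋆}_{m+1}, and for z ∈ C^{n+k+1⋆}_m and y ∈ C^{n+k⋆}_{m+1}, the cast of z is ≤ the tuple (y, m+1) if and only if there exists x ∈ C^{n+k⋆}_m with z ≤ (x, m) pointwise (after casting) and the cast of x ≤ y. -/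
/-- Condition (⋆) on a tuple `x : Fin N → Fin (m+1)` (with `N = n + k`):
`x i ≤ x n` for every `i < n`, and `x n ≤ x (n+1) ≤ ⋯ ≤ x (N-1)`. -/
def StarRow (n : ℕ) {N m : ℕ} (x : Fin N → Fin (m + 1)) : Prop :=
  (∀ (i : ℕ) (hi : i < n) (hn : n < N), x ⟨i, Nat.lt_trans hi hn⟩ ≤ x ⟨n, hn⟩) ∧
  (∀ (j : ℕ), n ≤ j → ∀ (h : j + 1 < N), x ⟨j, Nat.lt_of_succ_lt h⟩ ≤ x ⟨j + 1, h⟩)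

lemma snoc_mk_lt {N m : ℕ} (x : Fin N → Fin (m+1)) (v : Fin (m+1)) {i : ℕ} (h : i < N)
    (h' : i < N+1) :
    (Fin.snoc x v : Fin (N+1) → Fin (m+1)) ⟨i, h'⟩ = x ⟨i, h⟩ := by
  have : (⟨i, h'⟩ : Fin (N+1)) = Fin.castSucc ⟨i, h⟩ := rfl
  rw [this, Fin.snoc_castSucc]

lemma snoc_mk_last {N m : ℕ} (x : Fin N → Fin (m+1)) (v : Fin (m+1)) (h : N < N+1) :
    (Fin.snoc x v : Fin (N+1) → Fin (m+1)) ⟨N, h⟩ = v := by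
  have : (⟨N, h⟩ : Fin (N+1)) = Fin.last N := rfl
  rw [this, Fin.snoc_last]

lemma star_cast {n N m : ℕ} {x : Fin N → Fin (m+1)} (hx : StarRow n x) :
    StarRow n (fun i => Fin.castSucc (x i)) := by
  refine ⟨fun i hi hn => ?_, fun j hj h => ?_⟩
  · exact Fin.castSucc_le_castSucc_iff.mpr (hx.1 i hi hn)
  · exact Fin.castSucc_le_castSucc_iff.mpr (hx.2 j hj h)

lemma star_snoc {n N m : ℕ} {x : Fin N → Fin (m+1)} {v : Fin (m+1)} (hx : StarRow n x)
    (hv : ∀ i, x i ≤ v) : StarRow n (Fin.snoc x v : Fin (N+1) → Fin (m+1)) := by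
  constructor
  · intro i hi hn
    rcases Nat.lt_or_ge n N with h | h
    · rw [snoc_mk_lt x v (Nat.lt_trans hi h), snoc_mk_lt x v h]
      exact hx.1 i hi h
    · have hn' : n = N := le_antisymm (Nat.lt_succ_iff.mp hn) h
      subst hn'
      rw [snoc_mk_lt x v hi, snoc_mk_last]
      exact hv _
  · intro j hj h
    have hj1 : j + 1 ≤ N := Nat.lt_succ_iff.mp h
    rcases Nat.lt_or_ge (j+1) N with h' | h'
    · rw [snoc_mk_lt x v (Nat.lt_of_succ_lt h'), snoc_mk_lt x v h']
      exact hx.2 j hj h'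
    · have he : j + 1 = N := le_antisymm hj1 h'
      subst he
      rw [snoc_mk_lt x v (Nat.lt_succ_self j), snoc_mk_last]
      exact hv _

lemma star_init {n N m : ℕ} {w : Fin (N+1) → Fin (m+1)} (hw : StarRow n w) :
    StarRow n (fun i : Fin N => w (Fin.castSucc i)) := by
  refine ⟨fun i hi hn => ?_, fun j hj h => ?_⟩
  · exact hw.1 i hi (Nat.lt_succ_of_lt hn)
  · exact hw.2 j hj (Nat.lt_succ_of_lt h)

lemma starLeTop {n N m : ℕ} {x : Fin (N+1) → Fin (m+1)} (hx : StarRow n x) (hn : n ≤ N) :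
    ∀ i, x i ≤ x (Fin.last N) := by
  have chain : ∀ d j (h : j < N + 1), j + d = N → n ≤ j → x ⟨j, h⟩ ≤ x (Fin.last N) := by
    intro d
    induction d with
    | zero =>
      intro j h hd _
      have : (⟨j, h⟩ : Fin (N+1)) = Fin.last N := by
        simp [Fin.last, Fin.ext_iff]; omega
      rw [this]
    | succ d ih =>
      intro j h hd hnj
      have hj1 : j + 1 < N + 1 := by omega
      calc x ⟨j, h⟩ ≤ x ⟨j+1, hj1⟩ := hx.2 j hnj hj1
        _ ≤ x (Fin.last N) := ih (j+1) hj1 (by omega) (by omega)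
  intro i
  rcases Nat.lt_or_ge i.val n with hi | hi
  · have hnN : n < N + 1 := Nat.lt_succ_of_le hn
    have h1 : x ⟨i.val, i.isLt⟩ ≤ x ⟨n, hnN⟩ := by
      have := hx.1 i.val hi hnN
      convert this using 2
    calc x i = x ⟨i.val, i.isLt⟩ := by congr
      _ ≤ x ⟨n, hnN⟩ := h1
      _ ≤ x (Fin.last N) := chain (N - n) n hnN (by omega) le_rfl
  · calc x i = x ⟨i.val, i.isLt⟩ := by congr
      _ ≤ x (Fin.last N) := chain (N - i.val) i.val i.isLt (by omega) hi

/-- The lax pushout square for the row representation theorem: with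
`α : C^{n+k⋆}_m → C^{n+k⋆}_{m+1}` the coordinatewise cast and
`δ : C^{n+k⋆}_m → C^{n+k+1⋆}_m` appending the maximal value `m`, the square with bottom
map the coordinatewise cast `C^{n+k+1⋆}_m → C^{n+k+1⋆}_{m+1}` and right map
`C^{n+k⋆}_{m+1} → C^{n+k+1⋆}_{m+1}` appending `m+1` is a lax pushout. -/
theorem stmt_19 (n k m : ℕ) :
    -- (1) α and δ are well-defined, monotone and order-reflecting
    (∀ x : Fin (n + k) → Fin (m + 1), StarRow n x →
        StarRow n (fun i => Fin.castSucc (x i))) ∧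
    (∀ x : Fin (n + k) → Fin (m + 1), StarRow n x →
        StarRow n (Fin.snoc x (Fin.last m) : Fin (n + k + 1) → Fin (m + 1))) ∧
    (∀ x y : Fin (n + k) → Fin (m + 1), StarRow n x → StarRow n y →
        (x ≤ y ↔ (fun i => Fin.castSucc (x i)) ≤ fun i => Fin.castSucc (y i))) ∧
    (∀ x y : Fin (n + k) → Fin (m + 1), StarRow n x → StarRow n y →
        (x ≤ y ↔ (Fin.snoc x (Fin.last m) : Fin (n + k + 1) → Fin (m + 1))
          ≤ Fin.snoc y (Fin.last m))) ∧
    -- (2) the square lax commutes: left-bottom ≤ top-right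
    (∀ x : Fin (n + k) → Fin (m + 1), StarRow n x →
        (fun i : Fin (n + k + 1) =>
            Fin.castSucc ((Fin.snoc x (Fin.last m) : Fin (n + k + 1) → Fin (m + 1)) i))
          ≤ Fin.snoc (fun i => Fin.castSucc (x i)) (Fin.last (m + 1))) ∧
    -- (3) the square is a lax pushout:
    -- the bottom and right maps are well-defined,
    (∀ z : Fin (n + k + 1) → Fin (m + 1), StarRow n z →
        StarRow n (fun i => Fin.castSucc (z i))) ∧
    (∀ y : Fin (n + k) → Fin (m + 2), StarRow n y →
        StarRow n (Fin.snoc y (Fin.last (m + 1)) : Fin (n + k + 1) → Fin (m + 2))) ∧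
    -- the bottom map is order-reflecting,
    (∀ z z' : Fin (n + k + 1) → Fin (m + 1), StarRow n z → StarRow n z' →
        (fun i => Fin.castSucc (z i)) ≤ (fun i => Fin.castSucc (z' i)) → z ≤ z') ∧
    -- with down-closed image,
    (∀ z : Fin (n + k + 1) → Fin (m + 1), StarRow n z →
        ∀ w : Fin (n + k + 1) → Fin (m + 2), StarRow n w →
          w ≤ (fun i => Fin.castSucc (z i)) →
          ∃ z₀ : Fin (n + k + 1) → Fin (m + 1), StarRow n z₀ ∧
            w = fun i => Fin.castSucc (z₀ i)) ∧
    -- the right map is order-reflecting,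
    (∀ y y' : Fin (n + k) → Fin (m + 2), StarRow n y → StarRow n y' →
        (Fin.snoc y (Fin.last (m + 1)) : Fin (n + k + 1) → Fin (m + 2))
          ≤ Fin.snoc y' (Fin.last (m + 1)) → y ≤ y') ∧
    -- the images are disjoint,
    (∀ (z : Fin (n + k + 1) → Fin (m + 1)) (y : Fin (n + k) → Fin (m + 2)),
        StarRow n z → StarRow n y →
        (fun i => Fin.castSucc (z i)) ≠ Fin.snoc y (Fin.last (m + 1))) ∧
    -- and their union is everything,
    (∀ w : Fin (n + k + 1) → Fin (m + 2), StarRow n w →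
        (∃ z : Fin (n + k + 1) → Fin (m + 1), StarRow n z ∧
            w = fun i => Fin.castSucc (z i)) ∨
        (∃ y : Fin (n + k) → Fin (m + 2), StarRow n y ∧
            w = Fin.snoc y (Fin.last (m + 1)))) ∧
    -- and the lax pushout comparison condition holds
    (∀ (z : Fin (n + k + 1) → Fin (m + 1)) (y : Fin (n + k) → Fin (m + 2)),
        StarRow n z → StarRow n y →
        ((fun i => Fin.castSucc (z i)) ≤ Fin.snoc y (Fin.last (m + 1)) ↔
          ∃ x : Fin (n + k) → Fin (m + 1), StarRow n x ∧
            z ≤ (Fin.snoc x (Fin.last m) : Fin (n + k + 1) → Fin (m + 1)) ∧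
            (fun i => Fin.castSucc (x i)) ≤ y)) := by
  refine ⟨?_, ?_, ?_, ?_, ?_, ?_, ?_, ?_, ?_, ?_, ?_, ?_, ?_⟩
  · exact fun x hx => star_cast hx
  · exact fun x hx => star_snoc hx (fun i => Fin.le_last _)
  · intro x y _ _
    constructor
    · intro h i
      exact Fin.castSucc_le_castSucc_iff.mpr (h i)
    · intro h i
      exact Fin.castSucc_le_castSucc_iff.mp (h i)
  · intro x y _ _
    constructor
    · intro h i
      refine Fin.lastCases ?_ ?_ i
      · simp [Fin.snoc_last]
      · intro j; simpa [Fin.snoc_castSucc] using h j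
    · intro h i
      have := h (Fin.castSucc i)
      simpa [Fin.snoc_castSucc] using this
  · intro x _ i
    refine Fin.lastCases ?_ ?_ i
    · simp [Fin.snoc_last]
      exact Fin.le_last _
    · intro j; simp [Fin.snoc_castSucc]
  · exact fun z hz => star_cast hz
  · exact fun y hy => star_snoc hy (fun i => Fin.le_last _)
  · intro z z' _ _ h i
    exact Fin.castSucc_le_castSucc_iff.mp (h i)
  · intro z hz w hw hle
    have hb : ∀ i, (w i).val < m + 1 := by
      intro i
      have h1 : (w i).val ≤ (z i).val := hle i
      have h2 : (z i).val < m + 1 := (z i).isLt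
      omega
    refine ⟨fun i => ⟨(w i).val, hb i⟩, ⟨?_, ?_⟩, ?_⟩
    · intro i hi hn
      exact hw.1 i hi hn
    · intro j hj h
      exact hw.2 j hj h
    · funext i
      simp [Fin.ext_iff]
  · intro y y' _ _ h i
    have := h (Fin.castSucc i)
    simpa [Fin.snoc_castSucc] using this
  · intro z y _ _ h
    have := congrFun h (Fin.last (n + k))
    rw [Fin.snoc_last] at this
    have hv := Fin.ext_iff.mp this
    simp at hv
    have := (z (Fin.last (n + k))).isLt
    omega
  · intro w hw
    by_cases h : w (Fin.last (n + k)) = Fin.last (m + 1)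
    · right
      refine ⟨fun i => w (Fin.castSucc i), star_init hw, ?_⟩
      funext i
      refine Fin.lastCases ?_ ?_ i
      · rw [Fin.snoc_last]; exact h
      · intro j; rw [Fin.snoc_castSucc]
    · left
      have htop : (w (Fin.last (n + k))).val < m + 1 := by
        have := Fin.val_lt_last h
        simpa using this
      have hb : ∀ i, (w i).val < m + 1 := by
        intro i
        have h1 : (w i).val ≤ (w (Fin.last (n + k))).val :=
          starLeTop hw (Nat.le_add_right n k) i
        omega
      refine ⟨fun i => ⟨(w i).val, hb i⟩, ⟨?_, ?_⟩, ?_⟩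
      · intro i hi hn
        exact hw.1 i hi hn
      · intro j hj hjh
        exact hw.2 j hj hjh
      · funext i
        simp [Fin.ext_iff]
  · intro z y hz _
    constructor
    · intro h
      refine ⟨fun i => z (Fin.castSucc i), star_init hz, ?_, ?_⟩
      · intro i
        refine Fin.lastCases ?_ ?_ i
        · rw [Fin.snoc_last]; exact Fin.le_last _
        · intro j; rw [Fin.snoc_castSucc]
      · intro i
        have := h (Fin.castSucc i)
        simpa [Fin.snoc_castSucc] using this
    · rintro ⟨x, _, h1, h2⟩ i
      refine Fin.lastCases ?_ ?_ i
      · simp [Fin.snoc_last]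
        exact Fin.le_last _
      · intro j
        have ha := h1 (Fin.castSucc j)
        rw [Fin.snoc_castSucc] at ha
        have hb := h2 j
        simp only [Fin.snoc_castSucc]
        calc Fin.castSucc (z (Fin.castSucc j)) ≤ Fin.castSucc (x j) :=
              Fin.castSucc_le_castSucc_iff.mpr ha
          _ ≤ y j := hb
end
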